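/- arXiv:1611.02589 — 5 statements merged into one kernel-verified Lean document; each statement's English description precedes it below -/
import Mathlib

section
/- Let U be a finite poset that is universal for the family of all tree orders with at most n elements, i.e., every tree order with at most n elements embeds into U as an induced suborder. Then for every integer k ≥ 1, the k-fold product poset U^k (ordered componentwise: (u₁,…,u_k) ≤ (v₁,…,v_k) iff u_i ≤ v_i for all i) is universal for the family of all posets with at most n elements and tree-dimension at most k; in particular there is a universal poset of size |U|^k for this family. -/
/-- A partial order is a *tree order* if any two incomparable elements
have no common upper bound. -/
def IsTreeOrder (X : Type*) [PartialOrder X] : Prop :=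
  ∀ x y z : X, x ≤ y → x ≤ z → (y ≤ z ∨ z ≤ y)

/-- A relation is a *tree order relation* if it is a partial order in which
any two incomparable elements have no common upper bound. -/
def IsTreeOrderRel (X : Type*) (r : X → X → Prop) : Prop :=
  IsPartialOrder X r ∧ ∀ x y z : X, r x y → r x z → (r y z ∨ r z y)

/-- A poset has tree-dimension at most `k` if its order is the intersection
of `k` tree orders on the same ground set (each of which then extends the
order). -/
def TreeDimLE (X : Type*) [PartialOrder X] (k : ℕ) : Prop :=
  ∃ r : Fin k → X → X → Prop,
    (∀ i, IsTreeOrderRel X (r i)) ∧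
    (∀ x y : X, x ≤ y ↔ ∀ i, r i x y)

/-- `P` embeds into `U` as an induced suborder. -/
def EmbedsIn (P U : Type*) [PartialOrder P] [PartialOrder U] : Prop :=
  ∃ f : P → U, Function.Injective f ∧ ∀ a b : P, a ≤ b ↔ f a ≤ f b


def Reorder (P : Type) (_r : P → P → Prop) : Type := P

def reorderPO (P : Type) (r : P → P → Prop) (h : IsPartialOrder P r) :
    PartialOrder (Reorder P r) where
  le := r
  le_refl := h.refl
  le_trans := fun a b c hab hbc => h.trans a b c hab hbc
  le_antisymm := fun a b hab hba => h.antisymm a b hab hba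

/-- If the finite poset `U` is universal for tree orders with at most `n`
elements, then the componentwise-ordered power `U^k` is universal for posets
with at most `n` elements and tree-dimension at most `k`. -/
theorem universal_poset_power (n k : ℕ) (hk : 1 ≤ k)
    (U : Type) [Fintype U] [PartialOrder U]
    (hU : ∀ (X : Type) [Fintype X] [PartialOrder X],
      IsTreeOrder X → Fintype.card X ≤ n → EmbedsIn X U) :
    ∀ (P : Type) [Fintype P] [PartialOrder P],
      Fintype.card P ≤ n → TreeDimLE P k → EmbedsIn P (Fin k → U) :=  by
  intro P _ _ hcard hdim
  obtain ⟨r, hr, hiff⟩ := hdim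
  have key : ∀ i : Fin k, ∃ f : P → U, Function.Injective f ∧
      ∀ a b : P, r i a b ↔ f a ≤ f b := by
    intro i
    letI po := reorderPO P (r i) (hr i).1
    letI : Fintype (Reorder P (r i)) := ‹Fintype P›
    have htree : IsTreeOrder (Reorder P (r i)) := (hr i).2
    obtain ⟨f, hf1, hf2⟩ := hU (Reorder P (r i)) htree hcard
    exact ⟨f, hf1, hf2⟩
  choose f hf1 hf2 using key
  refine ⟨fun p i => f i p, ?_, ?_⟩
  · intro p q h
    exact hf1 ⟨0, hk⟩ (congrFun h ⟨0, hk⟩)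
  · intro a b
    rw [hiff]
    constructor
    · intro h i
      exact (hf2 i a b).1 (h i)
    · intro h i
      exact (hf2 i a b).2 (h i)
end

section
/- If a finite poset (X, ≤) with n elements has tree-dimension at most k, then it has order dimension at most 2k; consequently, (X, ≤) embeds as an induced suborder into the componentwise-ordered product (Fin n)^(2k), and the smallest size of a universal poset for the family of n-element posets with tree-dimension at most k is at most n^(2k). -/
/-- A poset has (order) dimension at most `m` if its order is the
intersection of `m` linear orders on the same ground set. -/
def OrderDimLE (X : Type*) [PartialOrder X] (m : ℕ) : Prop :=
  ∃ r : Fin m → X → X → Prop,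
    (∀ i, IsLinearOrder X (r i)) ∧
    (∀ x y : X, x ≤ y ↔ ∀ i, r i x y)

lemma chain_max {X : Type} (r : X → X → Prop) (hrefl : ∀ a, r a a)
    (htrans : ∀ a b c, r a b → r b c → r a c)
    (s : Finset X) (hs : s.Nonempty)
    (hchain : ∀ a ∈ s, ∀ b ∈ s, r a b ∨ r b a) :
    ∃ a, a ∈ s ∧ ∀ b ∈ s, r b a := by
  classical
  revert hs hchain
  induction s using Finset.induction with
  | empty => intro hs _; exact absurd hs (by simp)
  | @insert x s hx ih =>
    intro _ hchain
    rcases s.eq_empty_or_nonempty with h | h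
    · subst h
      exact ⟨x, by simp, by simp [hrefl]⟩
    · obtain ⟨a, ha, hmax⟩ := ih h
        (fun a ha b hb => hchain a (by simp [ha]) b (by simp [hb]))
      rcases hchain x (by simp) a (by simp [ha]) with h1 | h1
      · refine ⟨a, by simp [ha], ?_⟩
        rintro b hb
        rcases Finset.mem_insert.1 hb with rfl | hb
        · exact h1
        · exact hmax b hb
      · refine ⟨x, by simp, ?_⟩
        rintro b hb
        rcases Finset.mem_insert.1 hb with rfl | hb
        · exact hrefl _
        · exact htrans _ _ _ (hmax b hb) h1

section TreePart

variable {X : Type} [Fintype X]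

open Classical in
noncomputable def Uset (r : X → X → Prop) (x : X) : Finset X :=
  Finset.univ.filter (fun y => r x y)

open Classical in
noncomputable def Sset (r : X → X → Prop) (x y : X) : Finset X := Uset r x \ Uset r y

open Classical in
lemma mem_Sset {r : X → X → Prop} {x y z : X} :
    z ∈ Sset r x y ↔ r x z ∧ ¬ r y z := by
  simp [Sset, Uset]

open Classical in
noncomputable def mpt (r : X → X → Prop) (x y : X) : X :=
  if h : ∃ a, a ∈ Sset r x y ∧ ∀ b ∈ Sset r x y, r b a then h.choose else x

lemma mpt_spec {r : X → X → Prop} (hr : IsTreeOrderRel X r) {x y : X} (h : ¬ r y x) :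
    mpt r x y ∈ Sset r x y ∧ ∀ b ∈ Sset r x y, r b (mpt r x y) := by
  have hex : ∃ a, a ∈ Sset r x y ∧ ∀ b ∈ Sset r x y, r b a := by
    refine chain_max r hr.1.refl (fun a b c => hr.1.trans a b c) (Sset r x y)
      ⟨x, mem_Sset.2 ⟨hr.1.refl x, h⟩⟩
      (fun a ha b hb => hr.2 x a b (mem_Sset.1 ha).1 (mem_Sset.1 hb).1)
  rw [mpt, dif_pos hex]
  exact hex.choose_spec

lemma mpt_unique {r : X → X → Prop} (hr : IsTreeOrderRel X r) {x y : X} (h : ¬ r y x)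
    {a : X} (ha : a ∈ Sset r x y) (hm : ∀ b ∈ Sset r x y, r b a) : mpt r x y = a :=
  hr.1.antisymm _ _ (hm _ (mpt_spec hr h).1) ((mpt_spec hr h).2 a ha)

lemma mpt_ne {r : X → X → Prop} (hr : IsTreeOrderRel X r) {x y : X}
    (hxy : ¬ r x y) (hyx : ¬ r y x) : mpt r x y ≠ mpt r y x := by
  intro he
  have h1 := mem_Sset.1 (mpt_spec hr hyx).1
  have h2 := mem_Sset.1 (mpt_spec hr hxy).1
  rw [he] at h1
  exact h2.2 h1.1

end TreePart
section TreePart2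

variable {X : Type} [Fintype X]

lemma lemB {r : X → X → Prop} (hr : IsTreeOrderRel X r) {x y z : X}
    (hxy : r x y) (hyz : ¬ r y z) (hzy : ¬ r z y) :
    mpt r x z = mpt r y z ∧ mpt r z x = mpt r z y := by
  have tr : ∀ a b c : X, r a b → r b c → r a c := fun a b c => hr.1.trans a b c
  have tree := hr.2
  have hzx : ¬ r z x := fun hh => hzy (tr _ _ _ hh hxy)
  have hxz : ¬ r x z := fun hh => (tree x y z hxy hh).elim hyz hzy
  constructor
  · obtain ⟨ha, hmax⟩ := mpt_spec hr hzy
    obtain ⟨hya, hza⟩ := mem_Sset.1 ha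
    refine mpt_unique hr hzx (mem_Sset.2 ⟨tr _ _ _ hxy hya, hza⟩) ?_
    intro b hb
    obtain ⟨hxb, hzb⟩ := mem_Sset.1 hb
    rcases tree x (mpt r y z) b (tr _ _ _ hxy hya) hxb with h1 | h1
    · exact hmax b (mem_Sset.2 ⟨tr _ _ _ hya h1, hzb⟩)
    · exact h1
  · obtain ⟨ha, hmax⟩ := mpt_spec hr hyz
    obtain ⟨hza, hya⟩ := mem_Sset.1 ha
    have hxa : ¬ r x (mpt r z y) := by
      intro hxa
      rcases tree x y (mpt r z y) hxy hxa with h1 | h1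
      · exact hya h1
      · exact hzy (tr _ _ _ hza h1)
    refine mpt_unique hr hxz (mem_Sset.2 ⟨hza, hxa⟩) ?_
    intro b hb
    obtain ⟨hzb, hxb⟩ := mem_Sset.1 hb
    exact hmax b (mem_Sset.2 ⟨hzb, fun hyb => hxb (tr _ _ _ hxy hyb)⟩)

lemma lemC {r : X → X → Prop} (hr : IsTreeOrderRel X r) {x y z : X}
    (hxy : ¬ r x y) (hyx : ¬ r y x) (hyz : r y z) (hxz : ¬ r x z) :
    mpt r x z = mpt r x y ∧ mpt r z x = mpt r y x := by
  have tr : ∀ a b c : X, r a b → r b c → r a c := fun a b c => hr.1.trans a b c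
  have tree := hr.2
  have hzx : ¬ r z x := fun hh => hyx (tr _ _ _ hyz hh)
  constructor
  · obtain ⟨ha, hmax⟩ := mpt_spec hr hyx
    obtain ⟨hxa, hya⟩ := mem_Sset.1 ha
    have hza : ¬ r z (mpt r x y) := fun hh => hya (tr _ _ _ hyz hh)
    refine mpt_unique hr hzx (mem_Sset.2 ⟨hxa, hza⟩) ?_
    intro b hb
    obtain ⟨hxb, hzb⟩ := mem_Sset.1 hb
    refine hmax b (mem_Sset.2 ⟨hxb, ?_⟩)
    intro hyb
    rcases tree y b z hyb hyz with h1 | h1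
    · exact hxz (tr _ _ _ hxb h1)
    · exact hzb h1
  · obtain ⟨ha, hmax⟩ := mpt_spec hr hxy
    obtain ⟨hya, hxa⟩ := mem_Sset.1 ha
    have hza : r z (mpt r y x) := hmax z (mem_Sset.2 ⟨hyz, hxz⟩)
    refine mpt_unique hr hxz (mem_Sset.2 ⟨hza, hxa⟩) ?_
    intro b hb
    obtain ⟨hzb, hxb⟩ := mem_Sset.1 hb
    exact hmax b (mem_Sset.2 ⟨tr _ _ _ hyz hzb, hxb⟩)

lemma lemD {r : X → X → Prop} (hr : IsTreeOrderRel X r) {x y z : X}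
    (hxy : ¬ r x y) (hyx : ¬ r y x) (hyz : ¬ r y z) (hzy : ¬ r z y) (hzx : r z x) :
    mpt r x y = mpt r z y ∧ mpt r y x = mpt r y z := by
  have tr : ∀ a b c : X, r a b → r b c → r a c := fun a b c => hr.1.trans a b c
  have tree := hr.2
  constructor
  · obtain ⟨ha, hmax⟩ := mpt_spec hr hyz
    obtain ⟨hza, hya⟩ := mem_Sset.1 ha
    have hxa : r x (mpt r z y) := hmax x (mem_Sset.2 ⟨hzx, hyx⟩)
    refine mpt_unique hr hyx (mem_Sset.2 ⟨hxa, hya⟩) ?_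
    intro b hb
    obtain ⟨hxb, hyb⟩ := mem_Sset.1 hb
    exact hmax b (mem_Sset.2 ⟨tr _ _ _ hzx hxb, hyb⟩)
  · obtain ⟨ha, hmax⟩ := mpt_spec hr hxy
    obtain ⟨hya, hxa⟩ := mem_Sset.1 ha
    have hza : ¬ r z (mpt r y x) := by
      intro hh
      rcases tree z (mpt r y x) x hh hzx with h1 | h1
      · exact hyx (tr _ _ _ hya h1)
      · exact hxa h1
    refine (mpt_unique hr hzy (mem_Sset.2 ⟨hya, hza⟩) ?_).symm
    intro b hb
    obtain ⟨hyb, hzb⟩ := mem_Sset.1 hb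
    exact hmax b (mem_Sset.2 ⟨hyb, fun hh => hzb (tr _ _ _ hzx hh)⟩)

lemma lemShift {r : X → X → Prop} (hr : IsTreeOrderRel X r) {x y z : X}
    (hxy : ¬ r x y) (hyx : ¬ r y x) (hyz : ¬ r y z) (hzy : ¬ r z y)
    (hxz : ¬ r x z) (hzx : ¬ r z x) (h : r y (mpt r x z)) :
    mpt r y z = mpt r x z ∧ mpt r z y = mpt r z x := by
  have tr : ∀ a b c : X, r a b → r b c → r a c := fun a b c => hr.1.trans a b c
  have tree := hr.2
  obtain ⟨hc, hmaxc⟩ := mpt_spec hr hzx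
  obtain ⟨hxc, hzc⟩ := mem_Sset.1 hc
  constructor
  · refine mpt_unique hr hzy (mem_Sset.2 ⟨h, hzc⟩) ?_
    intro b hb
    obtain ⟨hyb, hzb⟩ := mem_Sset.1 hb
    rcases tree y b (mpt r x z) hyb h with h1 | h1
    · exact h1
    · exact hmaxc b (mem_Sset.2 ⟨tr _ _ _ hxc h1, hzb⟩)
  · obtain ⟨ha, hmaxa⟩ := mpt_spec hr hxz
    obtain ⟨hza, hxa⟩ := mem_Sset.1 ha
    have hya : ¬ r y (mpt r z x) := by
      intro hy
      rcases tree y (mpt r z x) (mpt r x z) hy h with h1 | h1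
      · exact hzc (tr _ _ _ hza h1)
      · exact hxa (tr _ _ _ hxc h1)
    refine mpt_unique hr hyz (mem_Sset.2 ⟨hza, hya⟩) ?_
    intro b hb
    obtain ⟨hzb, hyb⟩ := mem_Sset.1 hb
    refine hmaxa b (mem_Sset.2 ⟨hzb, ?_⟩)
    intro hx
    rcases tree x b (mpt r x z) hx hxc with h1 | h1
    · exact hzc (tr _ _ _ hzb h1)
    · exact hyb (tr _ _ _ h h1)

end TreePart2
section LtreePart

variable {X : Type} [Fintype X]

def Ltree (r t : X → X → Prop) (x y : X) : Prop :=
  r x y ∨ (¬ r x y ∧ ¬ r y x ∧ t (mpt r x y) (mpt r y x))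

lemma Ltree_trans {r t : X → X → Prop} (hr : IsTreeOrderRel X r) (ht : IsLinearOrder X t)
    {x y z : X} (h1 : Ltree r t x y) (h2 : Ltree r t y z) : Ltree r t x z := by
  have tr : ∀ a b c : X, r a b → r b c → r a c := fun a b c => hr.1.trans a b c
  have ttr : ∀ a b c : X, t a b → t b c → t a c := fun a b c => ht.trans a b c
  have tanti : ∀ a b : X, t a b → t b a → a = b := fun a b => ht.antisymm a b
  rcases h1 with hxy | ⟨hxy, hyx, t1⟩
  · rcases h2 with hyz | ⟨hyz, hzy, t2⟩
    · exact Or.inl (tr _ _ _ hxy hyz)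
    · -- r x y, y,z incomparable
      have hzx : ¬ r z x := fun hh => hzy (tr _ _ _ hh hxy)
      have hxz : ¬ r x z := fun hh => (hr.2 x y z hxy hh).elim hyz hzy
      obtain ⟨e1, e2⟩ := lemB hr hxy hyz hzy
      exact Or.inr ⟨hxz, hzx, by rw [e1, e2]; exact t2⟩
  · rcases h2 with hyz | ⟨hyz, hzy, t2⟩
    · -- x,y incomparable, r y z
      by_cases hxz : r x z
      · exact Or.inl hxz
      · have hzx : ¬ r z x := fun hh => hyx (tr _ _ _ hyz hh)
        obtain ⟨e1, e2⟩ := lemC hr hxy hyx hyz hxz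
        exact Or.inr ⟨hxz, hzx, by rw [e1, e2]; exact t1⟩
    · -- both incomparable
      by_cases hxz : r x z
      · exact Or.inl hxz
      by_cases hzx : r z x
      · -- contradiction via lemD
        obtain ⟨e1, e2⟩ := lemD hr hxy hyx hyz hzy hzx
        exfalso
        rw [e1, e2] at t1
        exact mpt_ne hr hzy hyz (tanti _ _ t2 t1).symm
      · -- x, y, z pairwise incomparable
        refine Or.inr ⟨hxz, hzx, ?_⟩
        by_cases h1 : r y (mpt r x z)
        · obtain ⟨e1, e2⟩ := lemShift hr hxy hyx hyz hzy hxz hzx h1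
          rw [← e1, ← e2]; exact t2
        by_cases h2 : r z (mpt r x y)
        · obtain ⟨e1, e2⟩ := lemShift hr hxz hzx hzy hyz hxy hyx h2
          exfalso
          rw [← e1, ← e2] at t1
          exact mpt_ne hr hyz hzy (tanti _ _ t2 t1)
        by_cases h3 : r z (mpt r y x)
        · obtain ⟨e1, e2⟩ := lemShift hr hyz hzy hzx hxz hyx hxy h3
          rw [e2, e1]; exact t1
        by_cases h4 : r x (mpt r y z)
        · obtain ⟨e1, e2⟩ := lemShift hr hyx hxy hxz hzx hyz hzy h4
          rw [e1, e2]; exact t2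
        by_cases h5 : r x (mpt r z y)
        · obtain ⟨e1, e2⟩ := lemShift hr hzx hxz hxy hyx hzy hyz h5
          exfalso
          rw [← e1, ← e2] at t2
          exact mpt_ne hr hxy hyx (tanti _ _ t1 t2)
        by_cases h6 : r y (mpt r z x)
        · obtain ⟨e1, e2⟩ := lemShift hr hzy hyz hyx hxy hzx hxz h6
          rw [← e2, ← e1]; exact t1
        · -- all branch points distinct: the three pairs of mpt's coincide
          have exy : mpt r x y = mpt r x z := by
            obtain ⟨haz, hmz⟩ := mpt_spec hr hzx
            obtain ⟨hay, hmy⟩ := mpt_spec hr hyx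
            obtain ⟨hxaz, hzaz⟩ := mem_Sset.1 haz
            obtain ⟨hxay, hzay⟩ := mem_Sset.1 hay
            exact hr.1.antisymm _ _
              (hmz _ (mem_Sset.2 ⟨hxay, h2⟩)) (hmy _ (mem_Sset.2 ⟨hxaz, h1⟩))
          have eyx : mpt r y x = mpt r y z := by
            obtain ⟨haz, hmz⟩ := mpt_spec hr hzy
            obtain ⟨hay, hmy⟩ := mpt_spec hr hxy
            obtain ⟨hyaz, hzaz⟩ := mem_Sset.1 haz
            obtain ⟨hyay, hxay⟩ := mem_Sset.1 hay
            exact hr.1.antisymm _ _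
              (hmz _ (mem_Sset.2 ⟨hyay, h3⟩)) (hmy _ (mem_Sset.2 ⟨hyaz, h4⟩))
          have ezx : mpt r z x = mpt r z y := by
            obtain ⟨haz, hmz⟩ := mpt_spec hr hyz
            obtain ⟨hay, hmy⟩ := mpt_spec hr hxz
            obtain ⟨hzaz, hyaz⟩ := mem_Sset.1 haz
            obtain ⟨hzay, hxay⟩ := mem_Sset.1 hay
            exact hr.1.antisymm _ _
              (hmz _ (mem_Sset.2 ⟨hzay, h6⟩)) (hmy _ (mem_Sset.2 ⟨hzaz, h5⟩))
          rw [← exy, ezx]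
          rw [eyx] at t1
          exact ttr _ _ _ t1 t2

lemma Ltree_linear {r t : X → X → Prop} (hr : IsTreeOrderRel X r)
    (ht : IsLinearOrder X t) : IsLinearOrder X (Ltree r t) := by
  refine { refl := fun a => Or.inl (hr.1.refl a),
           trans := fun a b c => Ltree_trans hr ht,
           antisymm := ?_, total := ?_ }
  · rintro a b (hab | ⟨hab, hba, t1⟩) (hba' | ⟨hba', hab', t2⟩)
    · exact hr.1.antisymm _ _ hab hba'
    · exact absurd hab hab'
    · exact absurd hba' hba
    · exact absurd (ht.antisymm _ _ t1 t2) (mpt_ne hr hab hba)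
  · intro a b
    by_cases hab : r a b
    · exact Or.inl (Or.inl hab)
    by_cases hba : r b a
    · exact Or.inr (Or.inl hba)
    rcases ht.total (mpt r a b) (mpt r b a) with h | h
    · exact Or.inl (Or.inr ⟨hab, hba, h⟩)
    · exact Or.inr (Or.inr ⟨hba, hab, h⟩)

lemma swap_linear {X : Type} {t : X → X → Prop} (ht : IsLinearOrder X t) :
    IsLinearOrder X (Function.swap t) :=
  { refl := fun a => ht.refl a,
    trans := fun a b c h1 h2 => ht.trans c b a h2 h1,
    antisymm := fun a b h1 h2 => ht.antisymm a b h2 h1,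
    total := fun a b => (ht.total b a) }

lemma Ltree_inter {r t : X → X → Prop} (hr : IsTreeOrderRel X r)
    (ht : IsLinearOrder X t) (x y : X) :
    r x y ↔ (Ltree r t x y ∧ Ltree r (Function.swap t) x y) := by
  constructor
  · exact fun h => ⟨Or.inl h, Or.inl h⟩
  · rintro ⟨h1 | ⟨hxy, hyx, t1⟩, h2⟩
    · exact h1
    rcases h2 with h2 | ⟨_, _, t2⟩
    · exact h2
    · exact absurd (ht.antisymm _ _ t1 t2) (mpt_ne hr hxy hyx)

lemma exists_linear (X : Type) [Fintype X] : ∃ t : X → X → Prop, IsLinearOrder X t := by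
  classical
  refine ⟨fun a b => Fintype.equivFin X a ≤ Fintype.equivFin X b,
    { refl := fun a => le_refl _,
      trans := fun a b c h1 h2 => le_trans h1 h2,
      antisymm := fun a b h1 h2 => (Fintype.equivFin X).injective (le_antisymm h1 h2),
      total := fun a b => le_total _ _ }⟩

end LtreePart
lemma treedim_orderdim {X : Type} [Fintype X] [PartialOrder X] {k : ℕ}
    (h : TreeDimLE X k) : OrderDimLE X (2 * k) := by
  obtain ⟨r, hri, hiff⟩ := h
  obtain ⟨t, ht⟩ := exists_linear X
  refine ⟨fun j => if hj : (j : ℕ) < k then Ltree (r ⟨j, hj⟩) t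
      else Ltree (r ⟨(j : ℕ) - k, by have := j.2; omega⟩) (Function.swap t), ?_, ?_⟩
  · intro j
    dsimp only
    by_cases hj : (j : ℕ) < k
    · rw [dif_pos hj]; exact Ltree_linear (hri _) ht
    · rw [dif_neg hj]; exact Ltree_linear (hri _) (swap_linear ht)
  · intro x y
    rw [hiff]
    constructor
    · intro H j
      by_cases hj : (j : ℕ) < k
      · rw [dif_pos hj]; exact Or.inl (H _)
      · rw [dif_neg hj]; exact Or.inl (H _)
    · intro H i
      rw [Ltree_inter (hri i) ht x y]
      constructor
      · have h1 := H ⟨(i : ℕ), by omega⟩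
        dsimp only at h1
        rw [dif_pos (show ((⟨(i : ℕ), by omega⟩ : Fin (2 * k)) : ℕ) < k from i.2)] at h1
        convert h1 using 3
      · have h2 := H ⟨(i : ℕ) + k, by omega⟩
        dsimp only at h2
        rw [dif_neg (show ¬ ((⟨(i : ℕ) + k, by omega⟩ : Fin (2 * k)) : ℕ) < k by simp)] at h2
        convert h2 using 3
        omega

lemma orderdim_embeds {X : Type} [Fintype X] [PartialOrder X] {m n : ℕ}
    (hcard : Fintype.card X = n) (hn : 1 ≤ n) (h : OrderDimLE X m) :
    EmbedsIn X (Fin m → Fin n) := by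
  classical
  obtain ⟨L, hlin, hiff⟩ := h
  set c : Fin m → X → ℕ := fun j x => (Finset.univ.filter (fun z => L j z x ∧ z ≠ x)).card
    with hc
  have hclt : ∀ j x, c j x < n := by
    intro j x
    have hsub : (Finset.univ.filter (fun z => L j z x ∧ z ≠ x)) ⊆ Finset.univ.erase x :=
      fun z hz => Finset.mem_erase.2 ⟨(Finset.mem_filter.1 hz).2.2, Finset.mem_univ z⟩
    have h1 := Finset.card_le_card hsub
    rw [Finset.card_erase_of_mem (Finset.mem_univ x), Finset.card_univ, hcard] at h1
    simp only [hc]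
    omega
  have hmono : ∀ j (x y : X), L j x y → x ≠ y → c j x < c j y := by
    intro j x y hL hne
    apply Finset.card_lt_card
    rw [Finset.ssubset_iff_of_subset]
    · exact ⟨x, Finset.mem_filter.2 ⟨Finset.mem_univ x, hL, hne⟩,
        fun hx => (Finset.mem_filter.1 hx).2.2 rfl⟩
    · intro z hz
      obtain ⟨-, hzx, hzne⟩ := Finset.mem_filter.1 hz
      refine Finset.mem_filter.2 ⟨Finset.mem_univ z, (hlin j).trans _ _ _ hzx hL, ?_⟩
      rintro rfl
      exact hne ((hlin j).antisymm _ _ hL hzx)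
  have key : ∀ j (x y : X), L j x y ↔ c j x ≤ c j y := by
    intro j x y
    constructor
    · intro hL
      rcases eq_or_ne x y with rfl | hne
      · exact le_refl _
      · exact (hmono j x y hL hne).le
    · intro hcle
      by_contra hL
      have hyx : L j y x := ((hlin j).total x y).resolve_left hL
      have hne : y ≠ x := by rintro rfl; exact hL ((hlin j).refl _)
      exact absurd hcle (not_le.2 (hmono j y x hyx hne))
  refine ⟨fun x j => ⟨c j x, hclt j x⟩, ?_, ?_⟩
  · intro a b hab
    have hcc : ∀ j, c j a = c j b := fun j => congrArg Fin.val (congrFun hab j)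
    exact le_antisymm
      ((hiff a b).2 (fun j => (key j a b).2 (hcc j).le))
      ((hiff b a).2 (fun j => (key j b a).2 (hcc j).ge))
  · intro a b
    rw [hiff]
    constructor
    · intro H j
      exact (key j a b).1 (H j)
    · intro H j
      exact (key j a b).2 (H j)

/-- An `n`-element poset of tree-dimension at most `k` has order dimension at
most `2k`, and consequently embeds as an induced suborder into the
componentwise-ordered power `(Fin n)^(2k)` (of size `n^(2k)`). -/
theorem tree_dim_le_k_dim_le_two_k (n k : ℕ) (hk : 1 ≤ k) (hn : 1 ≤ n)
    (X : Type) [Fintype X] [PartialOrder X]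
    (hcard : Fintype.card X = n) (h : TreeDimLE X k) :
    OrderDimLE X (2 * k) ∧ EmbedsIn X (Fin (2 * k) → Fin n) :=
  ⟨treedim_orderdim h, orderdim_embeds hcard hn (treedim_orderdim h)⟩
end

section
/- There exists a constant C such that for every n ≥ 4 there exist a natural number N ≤ C · n · (log₂ n)³ · (log₂ log₂ n)^C and a partial order ⊑ on Fin N such that every tree order with at most n elements embeds into (Fin N, ⊑) as an induced suborder. (Equivalently: there is a consistent ancestry-labeling scheme for n-node forests with labels of log₂ n + 3 log₂ log₂ n + O(log₂ log₂ log₂ n) bits.) -/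
open scoped Classical

namespace CAS

/-! ### Numeric helpers -/

lemma div_add_div_le (a b m : ℕ) : a / m + b / m ≤ (a + b) / m := by
  rcases Nat.eq_zero_or_pos m with h | h
  · simp [h]
  · rw [Nat.le_div_iff_mul_le h, Nat.add_mul]
    exact Nat.add_le_add (Nat.div_mul_le_self a m) (Nat.div_mul_le_self b m)

lemma pow_clog_le_two_mul {x : ℕ} (hx : 1 ≤ x) : 2 ^ Nat.clog 2 x ≤ 2 * x := by
  rcases eq_or_lt_of_le hx with h | h
  · simp [← h]
  · have h1 : 0 < Nat.clog 2 x := Nat.clog_pos (by norm_num) h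
    have h2 : 2 ^ (Nat.clog 2 x - 1) < x := Nat.pow_pred_clog_lt_self (by norm_num) h
    calc 2 ^ Nat.clog 2 x = 2 * 2 ^ (Nat.clog 2 x - 1) := by
          rw [← pow_succ']
          congr 1
          omega
      _ ≤ 2 * x := by omega

/-- capacity function -/
def phi (k s : ℕ) : ℕ := s + 4 * s * Nat.clog 2 s / 2 ^ k

/-- forest budget function -/
def WF (k D s : ℕ) : ℕ := s + 4 * s * (Nat.clog 2 D + 1) / 2 ^ k

lemma le_phi (k s : ℕ) : s ≤ phi k s := Nat.le_add_right _ _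

lemma phi_mono (k : ℕ) {s t : ℕ} (h : s ≤ t) : phi k s ≤ phi k t := by
  unfold phi
  have : 4 * s * Nat.clog 2 s ≤ 4 * t * Nat.clog 2 t :=
    Nat.mul_le_mul (by omega) (Nat.clog_mono_right _ h)
  exact Nat.add_le_add h (Nat.div_le_div_right this)

lemma phi_succ (k s : ℕ) : phi k s + 1 ≤ phi k (s + 1) := by
  unfold phi
  have : 4 * s * Nat.clog 2 s ≤ 4 * (s+1) * Nat.clog 2 (s+1) :=
    Nat.mul_le_mul (by omega) (Nat.clog_mono_right _ (by omega))
  have := Nat.div_le_div_right (c := 2 ^ k) this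
  omega

lemma phi_le_two_mul {k s : ℕ} (h : 4 * Nat.clog 2 s ≤ 2 ^ k) : phi k s ≤ 2 * s := by
  unfold phi
  have h1 : 4 * s * Nat.clog 2 s ≤ s * 2 ^ k := by
    calc 4 * s * Nat.clog 2 s = s * (4 * Nat.clog 2 s) := by ring
      _ ≤ s * 2 ^ k := Nat.mul_le_mul_left _ h
  have h2 : 4 * s * Nat.clog 2 s / 2 ^ k ≤ s * 2 ^ k / 2 ^ k := Nat.div_le_div_right h1
  have h3 : s * 2 ^ k / 2 ^ k = s := Nat.mul_div_cancel _ (Nat.pow_pos (by norm_num))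
  omega

lemma clog_half_lt {s : ℕ} (hs : 2 ≤ s) : Nat.clog 2 (s / 2) + 1 ≤ Nat.clog 2 s := by
  have h1 : 0 < Nat.clog 2 s := Nat.clog_pos (by norm_num) hs
  have h2 : s ≤ 2 ^ Nat.clog 2 s := Nat.le_pow_clog (by norm_num) _
  have h3 : s / 2 ≤ 2 ^ Nat.clog 2 s / 2 := Nat.div_le_div_right h2
  have h4 : 2 ^ Nat.clog 2 s / 2 = 2 ^ (Nat.clog 2 s - 1) := by
    rcases Nat.exists_eq_add_of_le h1 with ⟨m, hm⟩
    have hm' : Nat.clog 2 s = m + 1 := by omega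
    rw [hm']
    simp [pow_succ]
  have h5 : Nat.clog 2 (s / 2) ≤ Nat.clog 2 s - 1 := by
    rw [Nat.clog_le_iff_le_pow (by norm_num)]
    omega
  omega

/-- main splitting inequality for the `ff` step -/
lemma ffineq {k c s : ℕ} (hc : 1 ≤ c) (hcs : c ≤ s) :
    phi k c + WF k (s / 2) (s - c) ≤ phi k s := by
  rcases eq_or_lt_of_le hcs with h | h
  · subst h
    simp [WF]
  · -- c < s, so s ≥ 2
    have hs2 : 2 ≤ s := by omega
    obtain ⟨d, hd⟩ : ∃ d, s = c + d := ⟨s - c, by omega⟩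
    have hhalf : Nat.clog 2 (s / 2) + 1 ≤ Nat.clog 2 s := clog_half_lt hs2
    have hcc : Nat.clog 2 c ≤ Nat.clog 2 s := Nat.clog_mono_right _ hcs
    unfold phi WF
    have hdc : s - c = d := by omega
    rw [hdc]
    have e1 : 4 * c * Nat.clog 2 c ≤ 4 * c * Nat.clog 2 s := Nat.mul_le_mul_left _ hcc
    have e2 : 4 * d * (Nat.clog 2 (s / 2) + 1) ≤ 4 * d * Nat.clog 2 s :=
      Nat.mul_le_mul_left _ hhalf
    have e3 : 4 * c * Nat.clog 2 c / 2 ^ k + 4 * d * (Nat.clog 2 (s / 2) + 1) / 2 ^ k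
        ≤ 4 * s * Nat.clog 2 s / 2 ^ k := by
      calc 4 * c * Nat.clog 2 c / 2 ^ k + 4 * d * (Nat.clog 2 (s / 2) + 1) / 2 ^ k
          ≤ 4 * c * Nat.clog 2 s / 2 ^ k + 4 * d * Nat.clog 2 s / 2 ^ k :=
            Nat.add_le_add (Nat.div_le_div_right e1) (Nat.div_le_div_right e2)
        _ ≤ (4 * c * Nat.clog 2 s + 4 * d * Nat.clog 2 s) / 2 ^ k := div_add_div_le _ _ _
        _ = 4 * s * Nat.clog 2 s / 2 ^ k := by rw [hd]; ring_nf
    omega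

/-! ### Interval labels -/

def Valid (k M : ℕ) (p : ℕ × ℕ) : Prop :=
  1 ≤ p.2 ∧ p.2 ≤ p.1 ∧ p.1 ≤ M ∧ 2 ^ (Nat.clog 2 p.2 - k) ∣ p.1

/-- strict containment of intervals `[b - l, b)` encoded as pairs `(b, l)` -/
def scont (p q : ℕ × ℕ) : Prop :=
  p.1 ≤ q.1 ∧ p.2 + (q.1 - p.1) ≤ q.2 ∧ (p.1 ≠ q.1 ∨ p.2 ≠ q.2)

lemma scont_trans {p q r : ℕ × ℕ} (h1 : scont p q) (h2 : scont q r) : scont p r := by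
  obtain ⟨a1, a2, a3⟩ := h1
  obtain ⟨b1, b2, b3⟩ := h2
  refine ⟨le_trans a1 b1, by omega, ?_⟩
  by_contra h
  push_neg at h
  obtain ⟨e1, e2⟩ := h
  -- p.1 = r.1 and p.2 = r.2 squeeze q to equal p
  have : p.1 = q.1 := by omega
  have : p.2 = q.2 := by omega
  omega

lemma scont_asymm {p q : ℕ × ℕ} (h1 : scont p q) (h2 : scont q p) : False := by
  obtain ⟨a1, a2, a3⟩ := h1
  obtain ⟨b1, b2, b3⟩ := h2
  omega

section TreeSide

variable {X : Type} [Fintype X] [PartialOrder X]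

/-- the good-assignment predicate: all labels of elements of `S` are valid,
lie in the window `[w, B)`, strict ancestry gives strict containment, and
incomparable elements get disjoint intervals. -/
def Good (k M : ℕ) (S : Finset X) (w B : ℕ) (I : X → ℕ × ℕ) : Prop :=
  (∀ x ∈ S, Valid k M (I x)) ∧
  (∀ x ∈ S, (I x).1 ≤ B ∧ w + (I x).2 ≤ (I x).1) ∧
  (∀ x ∈ S, ∀ y ∈ S, x < y → (I x).1 ≤ (I y).1 ∧ (I y).1 + (I x).2 < (I x).1 + (I y).2) ∧
  (∀ x ∈ S, ∀ y ∈ S, ¬x ≤ y → ¬y ≤ x →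
    (I x).1 + (I y).2 ≤ (I y).1 ∨ (I y).1 + (I x).2 ≤ (I x).1)

lemma Good.congr {k M : ℕ} {S : Finset X} {w B : ℕ} {I I' : X → ℕ × ℕ}
    (h : Good k M S w B I) (he : ∀ x ∈ S, I' x = I x) : Good k M S w B I' := by
  obtain ⟨h1, h2, h3, h4⟩ := h
  refine ⟨?_, ?_, ?_, ?_⟩
  · intro x hx; rw [he x hx]; exact h1 x hx
  · intro x hx; rw [he x hx]; exact h2 x hx
  · intro x hx y hy hxy; rw [he x hx, he y hy]; exact h3 x hx y hy hxy
  · intro x hx y hy hxy hyx; rw [he x hx, he y hy]; exact h4 x hx y hy hxy hyx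

lemma Good.weaken {k M : ℕ} {S : Finset X} {w B w' B' : ℕ} {I : X → ℕ × ℕ}
    (h : Good k M S w B I) (hw : w' ≤ w) (hB : B ≤ B') : Good k M S w' B' I := by
  obtain ⟨h1, h2, h3, h4⟩ := h
  refine ⟨h1, ?_, h3, h4⟩
  intro x hx
  obtain ⟨e1, e2⟩ := h2 x hx
  omega

/-- separation: elements below a maximal element `ρ` of `S` are incomparable
with elements of `S` not below `ρ`. -/
lemma sep (htree : IsTreeOrder X) {S : Finset X} {ρ : X}
    (hmax : ∀ z ∈ S, ρ ≤ z → ρ = z) {x y : X}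
    (hxρ : x ≤ ρ) (hy : y ∈ S) (hyρ : ¬y ≤ ρ) : ¬x ≤ y ∧ ¬y ≤ x := by
  constructor
  · intro hxy
    rcases htree x y ρ hxy hxρ with h | h
    · exact hyρ h
    · exact hyρ ((hmax y hy h) ▸ le_refl _)
  · intro hyx
    exact hyρ (le_trans hyx hxρ)

/-- merging of two good assignments on a component split -/
lemma Good.merge (htree : IsTreeOrder X) {k M : ℕ} {S : Finset X} {ρ : X}
    (hmax : ∀ z ∈ S, ρ ≤ z → ρ = z)
    {I : X → ℕ × ℕ} {w B w₁ B₁ w₂ B₂ : ℕ}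
    (h₁ : Good k M (S.filter (· ≤ ρ)) w₁ B₁ I)
    (h₂ : Good k M (S \ S.filter (· ≤ ρ)) w₂ B₂ I)
    (hw1 : w ≤ w₁) (hw2 : w ≤ w₂) (hB1 : B₁ ≤ B) (hB2 : B₂ ≤ B) (hsep : B₂ ≤ w₁) :
    Good k M S w B I := by
  classical
  obtain ⟨a1, a2, a3, a4⟩ := h₁
  obtain ⟨b1, b2, b3, b4⟩ := h₂
  have hC : ∀ x : X, x ∈ S → x ≤ ρ → x ∈ S.filter (· ≤ ρ) := by
    intro x hx hle; simp [Finset.mem_filter, hx, hle]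
  have hD : ∀ x : X, x ∈ S → ¬x ≤ ρ → x ∈ S \ S.filter (· ≤ ρ) := by
    intro x hx hle; simp [Finset.mem_sdiff, Finset.mem_filter, hx, hle]
  refine ⟨?_, ?_, ?_, ?_⟩
  · intro x hx
    by_cases hxρ : x ≤ ρ
    · exact a1 x (hC x hx hxρ)
    · exact b1 x (hD x hx hxρ)
  · intro x hx
    by_cases hxρ : x ≤ ρ
    · have := a2 x (hC x hx hxρ); omega
    · have := b2 x (hD x hx hxρ); omega
  · intro x hx y hy hxy
    by_cases hxρ : x ≤ ρ <;> by_cases hyρ : y ≤ ρ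
    · exact a3 x (hC x hx hxρ) y (hC y hy hyρ) hxy
    · exact absurd (le_of_lt hxy) (sep htree hmax hxρ hy hyρ).1
    · exact absurd (le_of_lt hxy) fun h =>
        (sep htree hmax hyρ hx hxρ).2 h
    · exact b3 x (hD x hx hxρ) y (hD y hy hyρ) hxy
  · intro x hx y hy hxy hyx
    by_cases hxρ : x ≤ ρ <;> by_cases hyρ : y ≤ ρ
    · exact a4 x (hC x hx hxρ) y (hC y hy hyρ) hxy hyx
    · -- x in C, y in rest: y's interval entirely left of x's
      right
      have e1 := (b2 y (hD y hy hyρ)).1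
      have e2 := (a2 x (hC x hx hxρ)).2
      omega
    · left
      have e1 := (b2 x (hD x hx hxρ)).1
      have e2 := (a2 y (hC y hy hyρ)).2
      omega
    · exact b4 x (hD x hx hxρ) y (hD y hy hyρ) hxy hyx

/-- for any `x ∈ S` there is a maximal element of `S` above it -/
lemma exists_top_above (htree : IsTreeOrder X) (S : Finset X) {x : X} (hx : x ∈ S) :
    ∃ ρ ∈ S, x ≤ ρ ∧ ∀ z ∈ S, ρ ≤ z → ρ = z := by
  classical
  obtain ⟨ρ, hρ, hmax⟩ := (S.filter (x ≤ ·)).exists_maximal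
    ⟨x, by simp [Finset.mem_filter, hx]⟩
  rw [Finset.mem_filter] at hρ
  refine ⟨ρ, hρ.1, hρ.2, ?_⟩
  intro z hz hle
  by_contra hne
  exact hne (le_antisymm hle (hmax (by simp [Finset.mem_filter, hz, le_trans hρ.2 hle]) hle))

/-- component bound predicate -/
def CB (S : Finset X) (D : ℕ) : Prop :=
  ∀ x ∈ S, (S.filter fun y => ∃ z ∈ S, x ≤ z ∧ y ≤ z).card ≤ D

lemma CB.mono {S S' : Finset X} {D : ℕ} (hsub : S' ⊆ S) (h : CB S D) : CB S' D := by
  intro x hx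
  refine le_trans (Finset.card_le_card ?_) (h x (hsub hx))
  intro y hy
  rw [Finset.mem_filter] at hy ⊢
  obtain ⟨hy1, z, hz1, hz2, hz3⟩ := hy
  exact ⟨hsub hy1, z, hsub hz1, hz2, hz3⟩

/-- the statement produced for trees (sets with a top element) -/
def TreeCon (k M : ℕ) (S : Finset X) : Prop :=
  ∀ r ∈ S, (∀ x ∈ S, x ≤ r) → ∀ B cap : ℕ,
    phi k S.card ≤ cap → cap ≤ B → B ≤ M → 2 ^ (Nat.clog 2 cap - k) ∣ B →
    ∃ I : X → ℕ × ℕ, Good k M S (B - phi k S.card) B I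

/-- The forest-rest allocation: given a tree oracle, allocate a forest where each
component has size at most `D`, paying an alignment gap for each component. -/
lemma fr_alloc (htree : IsTreeOrder X) {k n m M : ℕ}
    (hk : 4 * Nat.clog 2 n ≤ 2 ^ k)
    (O : ∀ S' : Finset X, S'.card ≤ m → S'.card ≤ n → TreeCon k M S') :
    ∀ (s : ℕ) (S : Finset X), S.card ≤ s → S.card ≤ m → S.card ≤ n →
    ∀ D β : ℕ, CB S D → WF k D S.card ≤ β → β ≤ M →
    ∃ I : X → ℕ × ℕ, Good k M S (β - WF k D S.card) β I := by
  intro s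
  induction s using Nat.strong_induction_on with
  | _ s IH =>
    intro S hs hm hn D β hCB hWβ hβM
    rcases S.eq_empty_or_nonempty with hE | hNE
    · subst hE
      exact ⟨fun _ => (1, 1), by simp [Good]⟩
    -- pick a maximal element ρ and its component C
    obtain ⟨x₀, hx₀⟩ := hNE
    obtain ⟨ρ, hρS, -, hmax⟩ := exists_top_above htree S hx₀
    set C := S.filter (· ≤ ρ) with hCdef
    have hCsub : C ⊆ S := Finset.filter_subset _ _
    have hρC : ρ ∈ C := by simp [hCdef, Finset.mem_filter, hρS]
    set c := C.card with hc
    have hc1 : 1 ≤ c := Finset.card_pos.2 ⟨ρ, hρC⟩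
    have hcS : c ≤ S.card := Finset.card_le_card hCsub
    -- c ≤ D via CB at ρ
    have hcD : c ≤ D := by
      refine le_trans (Finset.card_le_card ?_) (hCB ρ hρS)
      intro y hy
      rw [Finset.mem_filter] at hy ⊢
      exact ⟨hy.1, ρ, hρS, le_refl _, hy.2⟩
    -- numeric facts
    have hφ2c : phi k c ≤ 2 * c :=
      phi_le_two_mul (le_trans (Nat.mul_le_mul_left 4
        (Nat.clog_mono_right 2 (le_trans hcS hn))) hk)
    have hφc1 : 1 ≤ phi k c := le_trans hc1 (le_phi _ _)
    set e := Nat.clog 2 (phi k c) - k with he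
    set gap := β % 2 ^ e with hgap
    set B₁ := β - gap with hB₁
    have hdvd : 2 ^ e ∣ B₁ := by
      have := Nat.div_add_mod β (2 ^ e)
      exact ⟨β / 2 ^ e, by omega⟩
    have hgapβ : gap ≤ β := Nat.mod_le _ _
    -- gap ≤ 4 * c / 2 ^ k
    have hgap4 : gap ≤ 4 * c / 2 ^ k := by
      rcases Nat.eq_zero_or_pos e with he0 | hepos
      · have hg0 : gap = 0 := by rw [hgap, he0, pow_zero, Nat.mod_one]
        rw [hg0]
        exact Nat.zero_le _
      · have hek : k ≤ Nat.clog 2 (phi k c) := by omega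
        have h2e : 2 ^ e * 2 ^ k = 2 ^ Nat.clog 2 (phi k c) := by
          rw [← pow_add]; congr 1; omega
        have h2' : 2 ^ Nat.clog 2 (phi k c) ≤ 2 * phi k c := pow_clog_le_two_mul hφc1
        have h4c : 2 ^ e * 2 ^ k ≤ 4 * c := by omega
        have : 2 ^ e ≤ 4 * c / 2 ^ k :=
          (Nat.le_div_iff_mul_le (Nat.pow_pos (by norm_num))).2 h4c
        have hlt : gap < 2 ^ e := Nat.mod_lt _ (Nat.pow_pos (by norm_num))
        omega
    -- main peeling inequality
    obtain ⟨d, hd⟩ : ∃ d, S.card = c + d := ⟨S.card - c, by omega⟩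
    have hpeel : phi k c + gap + WF k D d ≤ WF k D S.card := by
      have hclog : Nat.clog 2 c ≤ Nat.clog 2 D := Nat.clog_mono_right _ hcD
      have e1 : 4 * c * Nat.clog 2 c / 2 ^ k ≤ 4 * c * Nat.clog 2 D / 2 ^ k :=
        Nat.div_le_div_right (Nat.mul_le_mul_left _ hclog)
      have e2 : 4 * c * Nat.clog 2 D / 2 ^ k + 4 * c / 2 ^ k + 4 * d * (Nat.clog 2 D + 1) / 2 ^ k
          ≤ 4 * (c + d) * (Nat.clog 2 D + 1) / 2 ^ k := by
        calc 4 * c * Nat.clog 2 D / 2 ^ k + 4 * c / 2 ^ k + 4 * d * (Nat.clog 2 D + 1) / 2 ^ k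
            ≤ (4 * c * Nat.clog 2 D + 4 * c) / 2 ^ k + 4 * d * (Nat.clog 2 D + 1) / 2 ^ k :=
              Nat.add_le_add_right (div_add_div_le _ _ _) _
          _ ≤ (4 * c * Nat.clog 2 D + 4 * c + 4 * d * (Nat.clog 2 D + 1)) / 2 ^ k :=
              div_add_div_le _ _ _
          _ = 4 * (c + d) * (Nat.clog 2 D + 1) / 2 ^ k := by congr 1; ring
      unfold WF phi
      rw [hd]
      omega
    have hWd : WF k D d ≤ WF k D S.card := by
      unfold WF
      have : 4 * d * (Nat.clog 2 D + 1) ≤ 4 * S.card * (Nat.clog 2 D + 1) :=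
        Nat.mul_le_mul_right _ (by omega)
      have := Nat.div_le_div_right (c := 2 ^ k) this
      omega
    -- allocate the tree C at right end B₁ with capacity phi k c
    have hTC : TreeCon k M C := O C (by omega) (by omega)
    have htop : ∀ y ∈ C, y ≤ ρ := by
      intro y hy; rw [hCdef, Finset.mem_filter] at hy; exact hy.2
    have hcapB₁ : phi k c ≤ B₁ := by omega
    obtain ⟨I₁, hG₁⟩ := hTC ρ hρC htop B₁ (phi k c) (le_refl _) hcapB₁ (by omega)
      (by rw [← he]; exact hdvd)
    -- allocate the rest
    set S₂ := S \ C with hS₂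
    have hS₂card : S₂.card = d := by
      rw [hS₂, Finset.card_sdiff_of_subset hCsub]; omega
    have hd1 : d < S.card := by omega
    set β₂ := B₁ - phi k c with hβ₂
    have hCB₂ : CB S₂ D := hCB.mono (Finset.sdiff_subset)
    have hWβ₂ : WF k D S₂.card ≤ β₂ := by rw [hS₂card]; omega
    obtain ⟨I₂, hG₂⟩ := IH (s - 1) (by omega) S₂ (by omega) (by omega) (by omega) D β₂
      hCB₂ hWβ₂ (by omega)
    -- merge
    set I := fun x => if x ∈ C then I₁ x else I₂ x with hI
    have hG₁' : Good k M C (B₁ - phi k c) B₁ I :=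
      hG₁.congr (fun x hx => by simp [hI, hx])
    have hG₂' : Good k M S₂ (β₂ - WF k D S₂.card) β₂ I :=
      hG₂.congr (fun x hx => by
        have : x ∉ C := by rw [hS₂, Finset.mem_sdiff] at hx; exact hx.2
        simp [hI, this])
    refine ⟨I, Good.merge htree hmax hG₁' hG₂' ?_ ?_ ?_ ?_ ?_⟩
    · omega
    · rw [hS₂card]; omega
    · omega
    · omega
    · omega

/-- forest allocation with the largest component exempted from the gap -/
lemma ff_alloc (htree : IsTreeOrder X) {k n m M : ℕ}
    (hk : 4 * Nat.clog 2 n ≤ 2 ^ k)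
    (O : ∀ S' : Finset X, S'.card ≤ m → S'.card ≤ n → TreeCon k M S')
    (S : Finset X) (hm : S.card ≤ m) (hn : S.card ≤ n)
    (B cap : ℕ) (hcap : phi k S.card ≤ cap) (hcapB : cap ≤ B) (hBM : B ≤ M)
    (hdvd : 2 ^ (Nat.clog 2 cap - k) ∣ B) :
    ∃ I : X → ℕ × ℕ, Good k M S (B - cap) B I := by
  rcases S.eq_empty_or_nonempty with hE | hNE
  · subst hE
    exact ⟨fun _ => (1, 1), by simp [Good]⟩
  -- choose maximal element with largest component
  classical
  set R := S.filter (fun ρ => ∀ z ∈ S, ρ ≤ z → ρ = z) with hR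
  have hRne : R.Nonempty := by
    obtain ⟨x₀, hx₀⟩ := hNE
    obtain ⟨ρ, h1, -, h3⟩ := exists_top_above htree S hx₀
    exact ⟨ρ, by rw [hR, Finset.mem_filter]; exact ⟨h1, h3⟩⟩
  obtain ⟨ρ, hρR, hρmax⟩ := Finset.exists_max_image R
    (fun ρ => (S.filter (· ≤ ρ)).card) hRne
  rw [hR, Finset.mem_filter] at hρR
  obtain ⟨hρS, hmax⟩ := hρR
  set C := S.filter (· ≤ ρ) with hCdef
  have hCsub : C ⊆ S := Finset.filter_subset _ _
  have hρC : ρ ∈ C := by simp [hCdef, Finset.mem_filter, hρS]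
  set c := C.card with hc
  have hc1 : 1 ≤ c := Finset.card_pos.2 ⟨ρ, hρC⟩
  have hcS : c ≤ S.card := Finset.card_le_card hCsub
  -- allocate C as a tree at (B, phi k c)
  have hTC : TreeCon k M C := O C (by omega) (by omega)
  have htop : ∀ y ∈ C, y ≤ ρ := by
    intro y hy; rw [hCdef, Finset.mem_filter] at hy; exact hy.2
  have hφmono : phi k c ≤ phi k S.card := phi_mono _ hcS
  have hdvd' : 2 ^ (Nat.clog 2 (phi k c) - k) ∣ B := by
    refine dvd_trans (pow_dvd_pow 2 ?_) hdvd
    have := Nat.clog_mono_right 2 (le_trans hφmono hcap)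
    omega
  obtain ⟨I₁, hG₁⟩ := hTC ρ hρC htop B (phi k c) (le_refl _) (by omega) hBM hdvd'
  -- rest
  set S₂ := S \ C with hS₂
  obtain ⟨d, hd⟩ : ∃ d, S.card = c + d := ⟨S.card - c, by omega⟩
  have hS₂card : S₂.card = d := by rw [hS₂, Finset.card_sdiff_of_subset hCsub]; omega
  -- the main inequality
  have hmain : phi k c + WF k (S.card / 2) d ≤ phi k S.card := by
    have := ffineq (k := k) hc1 hcS
    have hdc : S.card - c = d := by omega
    rw [hdc] at this
    exact this
  -- CB for the rest with D = S.card / 2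
  have hCB₂ : CB S₂ (S.card / 2) := by
    intro x hx
    rw [hS₂, Finset.mem_sdiff] at hx
    obtain ⟨hxS, hxC⟩ := hx
    obtain ⟨ρx, hρxS, hxρx, hρxmax⟩ := exists_top_above htree S hxS
    -- the component of x in S₂ is inside S.filter (· ≤ ρx)
    have hsub2 : (S₂.filter fun y => ∃ z ∈ S₂, x ≤ z ∧ y ≤ z) ⊆ S.filter (· ≤ ρx) := by
      intro y hy
      rw [Finset.mem_filter] at hy
      obtain ⟨hyS₂, z, hzS₂, hxz, hyz⟩ := hy
      have hzS : z ∈ S := (Finset.sdiff_subset) hzS₂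
      have hyS : y ∈ S := (Finset.sdiff_subset) hyS₂
      rcases htree x z ρx hxz hxρx with h | h
      · exact Finset.mem_filter.2 ⟨hyS, le_trans hyz h⟩
      · exact Finset.mem_filter.2 ⟨hyS, le_trans hyz ((hρxmax z hzS h) ▸ le_refl _)⟩
    have hρxR : ρx ∈ R := by rw [hR, Finset.mem_filter]; exact ⟨hρxS, hρxmax⟩
    have hcard1 : (S.filter (· ≤ ρx)).card ≤ c := hρmax ρx hρxR
    -- ρx ≠ ρ since x ∉ C
    have hρρx : ρx ≠ ρ := by
      intro h
      exact hxC (by simp [hCdef, Finset.mem_filter, hxS, h ▸ hxρx])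
    -- components disjoint
    have hdisj : Disjoint (S.filter (· ≤ ρx)) C := by
      rw [Finset.disjoint_left]
      intro a ha haC
      rw [Finset.mem_filter] at ha
      rw [hCdef, Finset.mem_filter] at haC
      rcases htree a ρx ρ ha.2 haC.2 with h | h
      · exact hρρx (hρxmax ρ hρS h)
      · exact hρρx (hmax ρx hρxS h).symm
    have hcard2 : (S.filter (· ≤ ρx)).card + c ≤ S.card := by
      have := Finset.card_union_of_disjoint hdisj
      have hsub3 : (S.filter (· ≤ ρx)) ∪ C ⊆ S :=
        Finset.union_subset (Finset.filter_subset _ _) hCsub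
      have := Finset.card_le_card hsub3
      omega
    have : (S₂.filter fun y => ∃ z ∈ S₂, x ≤ z ∧ y ≤ z).card ≤ (S.filter (· ≤ ρx)).card :=
      Finset.card_le_card hsub2
    have h2 : 2 * (S.filter (· ≤ ρx)).card ≤ S.card := by omega
    omega
  -- allocate rest by fr
  set β := B - phi k c with hβ
  have hWβ₂ : WF k (S.card / 2) S₂.card ≤ β := by
    rw [hS₂card]; omega
  obtain ⟨I₂, hG₂⟩ := fr_alloc htree hk O (S₂.card) S₂ (le_refl _)
    (le_trans (Finset.card_le_card Finset.sdiff_subset) hm)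
    (le_trans (Finset.card_le_card Finset.sdiff_subset) hn)
    (S.card / 2) β hCB₂ hWβ₂ (by omega)
  -- merge
  set I := fun x => if x ∈ C then I₁ x else I₂ x with hI
  have hG₁' : Good k M C (B - phi k c) B I :=
    hG₁.congr (fun x hx => by simp [hI, hx])
  have hG₂' : Good k M S₂ (β - WF k (S.card / 2) S₂.card) β I :=
    hG₂.congr (fun x hx => by
      have : x ∉ C := by rw [hS₂, Finset.mem_sdiff] at hx; exact hx.2
      simp [hI, this])
  refine ⟨I, Good.merge htree hmax hG₁' hG₂' ?_ ?_ ?_ ?_ ?_⟩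
  · omega
  · rw [hS₂card]; omega
  · omega
  · omega
  · omega

/-- the tree allocation theorem -/
lemma tree_con (htree : IsTreeOrder X) {k n M : ℕ}
    (hk : 4 * Nat.clog 2 n ≤ 2 ^ k) :
    ∀ (s : ℕ) (S : Finset X), S.card ≤ s → S.card ≤ n → TreeCon k M S := by
  intro s
  induction s using Nat.strong_induction_on with
  | _ s IH =>
    intro S hs hn r hrS htop B cap hcap hcapB hBM hdvd
    have hcard1 : 1 ≤ S.card := Finset.card_pos.2 ⟨r, hrS⟩
    set φs := phi k S.card with hφs
    have hφs1 : 1 ≤ φs := le_trans hcard1 (le_phi _ _)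
    have hφsB : φs ≤ B := le_trans hcap hcapB
    set S' := S.erase r with hS'
    have hS'card : S'.card = S.card - 1 := Finset.card_erase_of_mem hrS
    have hS'sub : S' ⊆ S := Finset.erase_subset _ _
    -- oracle for smaller trees
    have O : ∀ S'' : Finset X, S''.card ≤ S.card - 1 → S''.card ≤ n → TreeCon k M S'' := by
      intro S'' h1 h2
      exact IH (s - 1) (by omega) S'' (by omega) h2
    -- allocate the children forest
    have hφsucc : phi k S'.card + 1 ≤ φs := by
      rw [hS'card, hφs]
      have := phi_succ k (S.card - 1)
      have h1 : S.card - 1 + 1 = S.card := by omega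
      rw [h1] at this
      exact this
    have hdvd' : 2 ^ (Nat.clog 2 (φs - 1) - k) ∣ B := by
      refine dvd_trans (pow_dvd_pow 2 ?_) hdvd
      have := Nat.clog_mono_right 2 (le_trans (Nat.sub_le φs 1) hcap)
      omega
    obtain ⟨I', hG'⟩ := ff_alloc htree hk O S'
      (by omega) (by omega) B (φs - 1) (by omega) (by omega) hBM hdvd'
    set I := fun x => if x = r then (B, φs) else I' x with hI
    have hG'' : Good k M S' (B - (φs - 1)) B I :=
      hG'.congr (fun x hx => by
        have : x ≠ r := Finset.ne_of_mem_erase hx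
        simp [hI, this])
    obtain ⟨a1, a2, a3, a4⟩ := hG''
    have hIr : I r = (B, φs) := by simp [hI]
    have hmemS' : ∀ x ∈ S, x ≠ r → x ∈ S' := by
      intro x hx hne; rw [hS']; exact Finset.mem_erase.2 ⟨hne, hx⟩
    refine ⟨I, ?_, ?_, ?_, ?_⟩
    · intro x hx
      by_cases hxr : x = r
      · subst hxr
        rw [hIr]
        refine ⟨hφs1, hφsB, hBM, ?_⟩
        show 2 ^ (Nat.clog 2 φs - k) ∣ B
        refine dvd_trans (pow_dvd_pow 2 ?_) hdvd
        have := Nat.clog_mono_right 2 hcap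
        omega
      · exact a1 x (hmemS' x hx hxr)
    · intro x hx
      by_cases hxr : x = r
      · subst hxr; rw [hIr]; simp; omega
      · have := a2 x (hmemS' x hx hxr); omega
    · intro x hx y hy hxy
      by_cases hyr : y = r
      · have hxy' : x < r := hyr ▸ hxy
        have hxr : x ≠ r := ne_of_lt hxy'
        have hx' := hmemS' x hx hxr
        have h1 := a1 x hx'
        have h2 := a2 x hx'
        have hIy : I y = (B, φs) := by rw [hyr]; exact hIr
        rw [hIy]
        simp only
        constructor
        · exact h2.1
        · omega
      · have hxr : x ≠ r := by
          intro h
          subst h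
          exact absurd (htop y hy) (not_le_of_gt hxy)
        exact a3 x (hmemS' x hx hxr) y (hmemS' y hy hyr) hxy
    · intro x hx y hy hxy hyx
      have hxr : x ≠ r := by
        intro h; subst h; exact hyx (htop y hy)
      have hyr : y ≠ r := by
        intro h; subst h; exact hxy (htop x hx)
      exact a4 x (hmemS' x hx hxr) y (hmemS' y hy hyr) hxy hyx

end TreeSide

/-! ### Encoding of valid labels into `Fin N` -/

/-- encode a pair `(b, l)` -/
def enc (k M : ℕ) (p : ℕ × ℕ) : ℕ :=
  let t := Nat.clog 2 p.2
  t * (M * 2 ^ k) + (if t = 0 then p.1 else p.1 / 2 ^ (t - k) * 2 ^ (t - 1) + (p.2 - 2 ^ (t - 1) - 1))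

/-- decode -/
def dec (k M : ℕ) (x : ℕ) : ℕ × ℕ :=
  let t := x / (M * 2 ^ k)
  let c := x % (M * 2 ^ k)
  if t = 0 then (c, 1) else (c / 2 ^ (t - 1) * 2 ^ (t - k), 2 ^ (t - 1) + 1 + c % 2 ^ (t - 1))

lemma enc_dec {k M T : ℕ} (hM : M = 2 ^ T) (hk : 1 ≤ k) (p : ℕ × ℕ) (hp : Valid k M p) :
    enc k M p < (T + 1) * (M * 2 ^ k) ∧ dec k M (enc k M p) = p := by
  obtain ⟨h1, h2, h3, h4⟩ := hp
  obtain ⟨b, l⟩ := p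
  simp only at h1 h2 h3 h4
  set t := Nat.clog 2 l with ht
  have hMpos : 0 < M := by rw [hM]; exact Nat.pow_pos (by norm_num)
  have h2k : (2:ℕ) ≤ 2 ^ k := by
    calc (2:ℕ) = 2 ^ 1 := (pow_one 2).symm
    _ ≤ 2 ^ k := Nat.pow_le_pow_right (by norm_num) hk
  have htT : t ≤ T := by
    have hbM : b ≤ 2 ^ T := hM ▸ h3
    have h5 : Nat.clog 2 l ≤ Nat.clog 2 (2 ^ T) := Nat.clog_mono_right _ (le_trans h2 hbM)
    rw [Nat.clog_pow 2 T (by norm_num)] at h5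
    exact h5
  rcases Nat.eq_zero_or_pos t with ht0 | htpos
  · -- l = 1
    have hl1 : l = 1 := by
      by_contra h
      have : 2 ≤ l := by omega
      have := Nat.clog_pos (b := 2) (by norm_num) this
      omega
    have henc : enc k M (b, l) = b := by
      simp [enc, ← ht, ht0]
    have hblt : b < M * 2 ^ k := by
      calc b ≤ M := h3
        _ < M * 2 ^ k := by
          have : M * 2 ≤ M * 2 ^ k := Nat.mul_le_mul_left _ h2k
          omega
    constructor
    · rw [henc]
      calc b < M * 2 ^ k := hblt
        _ ≤ (T + 1) * (M * 2 ^ k) := Nat.le_mul_of_pos_left _ (by omega)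
    · rw [henc]
      have e1 : b / (M * 2 ^ k) = 0 := Nat.div_eq_of_lt hblt
      have e2 : b % (M * 2 ^ k) = b := Nat.mod_eq_of_lt hblt
      simp [dec, e1, e2, hl1]
  · -- t ≥ 1, so l ≥ 2
    have hl2 : 2 ≤ l := by
      by_contra h
      have : l = 1 := by omega
      rw [this] at ht
      simp [Nat.clog] at ht
      omega
    have hlup : l ≤ 2 ^ t := by rw [ht]; exact Nat.le_pow_clog (by norm_num) _
    have hllow : 2 ^ (t - 1) < l := by
      rw [ht]; exact Nat.pow_pred_clog_lt_self (by norm_num) hl2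
    set q := b / 2 ^ (t - k) with hq
    set ee := l - 2 ^ (t - 1) - 1 with hee
    have heelt : ee < 2 ^ (t - 1) := by
      have : 2 ^ t = 2 * 2 ^ (t - 1) := by
        rw [← pow_succ']; congr 1; omega
      omega
    have hqb : q * 2 ^ (t - k) = b := Nat.div_mul_cancel h4
    have henc : enc k M (b, l) = t * (M * 2 ^ k) + (q * 2 ^ (t - 1) + ee) := by
      simp only [enc, ← ht, ← hq, ← hee]
      have : ¬ (t = 0) := by omega
      simp [this]
    -- the inner code is < M * 2^k
    have hcode : q * 2 ^ (t - 1) + ee < M * 2 ^ k := by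
      have key : q * 2 ^ (t - 1) ≤ M * 2 ^ k / 2 := by
        rcases le_or_gt t k with htk | htk
        · -- t ≤ k : q = b / 1 = b... careful: 2^(t-k) = 2^0 = 1
          have : t - k = 0 := by omega
          have hqb' : q = b := by rw [hq, this]; simp
          have e1 : 2 ^ (t - 1) * 2 ≤ 2 ^ k := by
            calc 2 ^ (t - 1) * 2 = 2 ^ (t - 1 + 1) := by rw [pow_succ]
            _ ≤ 2 ^ k := Nat.pow_le_pow_right (by norm_num) (by omega)
          calc q * 2 ^ (t - 1) ≤ M * 2 ^ (t - 1) := Nat.mul_le_mul_right _ (by omega)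
            _ ≤ M * 2 ^ k / 2 := by
                rw [Nat.le_div_iff_mul_le (by norm_num)]
                calc M * 2 ^ (t - 1) * 2 = M * (2 ^ (t - 1) * 2) := by ring
                  _ ≤ M * 2 ^ k := Nat.mul_le_mul_left M e1
        · -- t > k
          have e0 : q * 2 ^ (t - k) ≤ b := by rw [hqb]
          have e1 : 2 ^ (t - 1) = 2 ^ (t - k) * 2 ^ (k - 1) := by
            rw [← pow_add]; congr 1; omega
          calc q * 2 ^ (t - 1) = q * 2 ^ (t - k) * 2 ^ (k - 1) := by rw [e1]; ring
            _ ≤ b * 2 ^ (k - 1) := Nat.mul_le_mul_right _ e0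
            _ ≤ M * 2 ^ (k - 1) := Nat.mul_le_mul_right _ h3
            _ ≤ M * 2 ^ k / 2 := by
                rw [Nat.le_div_iff_mul_le (by norm_num)]
                have h2k1 : 2 ^ (k - 1) * 2 = 2 ^ k := by
                  rw [← pow_succ]; congr 1; omega
                exact le_of_eq (by rw [mul_assoc, h2k1])
      have hee2 : ee < M := by
        have : 2 ^ (t - 1) < l := hllow
        omega
      have hM2 : M ≤ M * 2 ^ k / 2 := by
        rw [Nat.le_div_iff_mul_le (by norm_num)]
        calc M * 2 = 2 * M := by ring
          _ ≤ 2 ^ k * M := Nat.mul_le_mul_right _ h2k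
          _ = M * 2 ^ k := by ring
      have : M * 2 ^ k / 2 * 2 ≤ M * 2 ^ k := Nat.div_mul_le_self _ _
      omega
    constructor
    · rw [henc]
      calc t * (M * 2 ^ k) + (q * 2 ^ (t - 1) + ee) < t * (M * 2 ^ k) + M * 2 ^ k := by omega
        _ = (t + 1) * (M * 2 ^ k) := by ring
        _ ≤ (T + 1) * (M * 2 ^ k) := Nat.mul_le_mul_right _ (by omega)
    · rw [henc]
      set m0 := M * 2 ^ k with hm0
      set code := q * 2 ^ (t - 1) + ee with hcode'
      have hm0pos : 0 < m0 := by
        rw [hm0]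
        exact Nat.mul_pos hMpos (Nat.pow_pos (by norm_num))
      have hcomm : t * m0 + code = code + m0 * t := by ring
      have e1 : (t * m0 + code) / m0 = t := by
        rw [hcomm, Nat.add_mul_div_left _ _ hm0pos, Nat.div_eq_of_lt hcode]
        omega
      have e2 : (t * m0 + code) % m0 = code := by
        rw [hcomm, Nat.add_mul_mod_self_left]
        exact Nat.mod_eq_of_lt hcode
      have hpos1 : 0 < 2 ^ (t - 1) := Nat.pow_pos (by norm_num)
      have hcomm2 : code = ee + 2 ^ (t - 1) * q := by rw [hcode']; ring
      have e3 : code / 2 ^ (t - 1) = q := by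
        rw [hcomm2, Nat.add_mul_div_left _ _ hpos1, Nat.div_eq_of_lt heelt]
        omega
      have e4 : code % 2 ^ (t - 1) = ee := by
        rw [hcomm2, Nat.add_mul_mod_self_left]
        exact Nat.mod_eq_of_lt heelt
      show dec k M (t * m0 + code) = (b, l)
      have htne : ¬ ((t * m0 + code) / (M * 2 ^ k) = 0) := by
        rw [← hm0, e1]; omega
      simp only [dec, ← hm0, e1, e2, htne, if_false]
      rw [if_neg (by omega : ¬ t = 0), e3, e4, hqb]
      have hl' : 2 ^ (t - 1) + 1 + ee = l := by omega
      rw [hl']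

end CAS


/-- Consistent ancestry labeling: there is a partial order on a label set of
size `O(n · (log₂ n)³ · (log₂ log₂ n)^{O(1)})` into which every tree order
with at most `n` elements embeds as an induced suborder. -/
theorem consistent_ancestry_scheme :
    ∃ C : ℕ, ∀ n : ℕ, 4 ≤ n →
      ∃ (N : ℕ) (r : Fin N → Fin N → Prop),
        N ≤ C * n * (Nat.log 2 n) ^ 3 * (Nat.log 2 (Nat.log 2 n)) ^ C ∧
        IsPartialOrder (Fin N) r ∧
        ∀ (X : Type) [Fintype X] [PartialOrder X],
          IsTreeOrder X → Fintype.card X ≤ n →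
          ∃ f : X → Fin N,
            Function.Injective f ∧ ∀ a b : X, a ≤ b ↔ r (f a) (f b) := by
  refine ⟨192, ?_⟩
  intro n hn
  set L := Nat.log 2 n with hL
  have hL2 : 2 ≤ L := by
    have h4 : Nat.log 2 4 = 2 := Nat.log_eq_of_pow_le_of_lt_pow (by norm_num) (by norm_num)
    calc 2 = Nat.log 2 4 := h4.symm
      _ ≤ L := Nat.log_mono_right hn
  set H := Nat.clog 2 n with hH
  set k := Nat.clog 2 (4 * H + 4) with hkdef
  have hk4 : 4 * H + 4 ≤ 2 ^ k := Nat.le_pow_clog (by norm_num) _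
  have hkn : 4 * Nat.clog 2 n ≤ 2 ^ k := by rw [← hH]; omega
  have hk1 : 1 ≤ k := by
    rcases Nat.eq_zero_or_pos k with h | h
    · rw [h, pow_zero] at hk4; omega
    · exact h
  set P := CAS.phi k n with hP
  have hPn : n ≤ P := CAS.le_phi _ _
  have hP2 : P ≤ 2 * n := CAS.phi_le_two_mul hkn
  set T := Nat.clog 2 P with hT
  set M := 2 ^ T with hM
  have hPM : P ≤ M := by rw [hM, hT]; exact Nat.le_pow_clog (by norm_num) _
  set N := (T + 1) * (M * 2 ^ k) with hN
  refine ⟨N, fun x y => x = y ∨ CAS.scont (CAS.dec k M x.val) (CAS.dec k M y.val), ?_, ?_, ?_⟩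
  · -- the size bound
    have hnL : n < 2 ^ (L + 1) := by
      rw [hL]; exact Nat.lt_pow_succ_log_self (by norm_num) n
    have hHle : H ≤ L + 1 := by
      rw [hH, Nat.clog_le_iff_le_pow (by norm_num : (1:ℕ) < 2)]; omega
    have h2k : 2 ^ k ≤ 8 * H + 8 := by
      have := CAS.pow_clog_le_two_mul (x := 4 * H + 4) (by omega)
      rw [← hkdef] at this
      omega
    have hTle : T ≤ L + 2 := by
      rw [hT, Nat.clog_le_iff_le_pow (by norm_num : (1:ℕ) < 2)]
      have : 2 ^ (L + 2) = 2 * 2 ^ (L + 1) := by rw [pow_succ]; ring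
      omega
    have hMle : M ≤ 4 * n := by
      have h1 : M ≤ 2 ^ (L + 2) := by
        rw [hM]; exact Nat.pow_le_pow_right (by norm_num) hTle
      have h2 : 2 ^ L ≤ n := by rw [hL]; exact Nat.pow_log_le_self 2 (by omega)
      have h3 : 2 ^ (L + 2) = 4 * 2 ^ L := by rw [pow_add]; ring
      omega
    have step1 : N ≤ (L + 3) * ((4 * n) * (8 * (L + 1) + 8)) := by
      rw [hN]
      exact Nat.mul_le_mul (by omega) (Nat.mul_le_mul hMle (by omega))
    have step2 : (L + 3) * ((4 * n) * (8 * (L + 1) + 8)) ≤ 192 * n * L ^ 2 := by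
      have e : (L + 3) * ((4 * n) * (8 * (L + 1) + 8)) = n * (32 * L ^ 2 + 160 * L + 192) := by
        ring
      have e2 : 32 * L ^ 2 + 160 * L + 192 ≤ 192 * L ^ 2 := by
        have f1 : 2 * 2 ≤ L * L := Nat.mul_le_mul hL2 hL2
        have f2 : 2 * L ≤ L * L := Nat.mul_le_mul hL2 (le_refl L)
        nlinarith [f1, f2]
      calc (L + 3) * ((4 * n) * (8 * (L + 1) + 8)) = n * (32 * L ^ 2 + 160 * L + 192) := e
        _ ≤ n * (192 * L ^ 2) := Nat.mul_le_mul_left _ e2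
        _ = 192 * n * L ^ 2 := by ring
    have step3 : 192 * n * L ^ 2 ≤ 192 * n * L ^ 3 :=
      Nat.mul_le_mul_left _ (Nat.pow_le_pow_right (by omega) (by norm_num))
    have hlogL : 1 ≤ (Nat.log 2 L) ^ 192 := by
      have : 0 < Nat.log 2 L := Nat.log_pos (by norm_num) hL2
      exact Nat.one_le_pow _ _ this
    calc N ≤ 192 * n * L ^ 3 := le_trans step1 (le_trans step2 step3)
      _ = 192 * n * L ^ 3 * 1 := by ring
      _ ≤ 192 * n * L ^ 3 * (Nat.log 2 L) ^ 192 := Nat.mul_le_mul_left _ hlogL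
  · -- partial order
    refine { refl := fun x => Or.inl rfl, trans := ?_, antisymm := ?_ }
    · intro x y z hxy hyz
      rcases hxy with rfl | h1
      · exact hyz
      · rcases hyz with rfl | h2
        · exact Or.inr h1
        · exact Or.inr (CAS.scont_trans h1 h2)
    · intro x y hxy hyx
      rcases hxy with rfl | h1
      · rfl
      · rcases hyx with rfl | h2
        · rfl
        · exact (CAS.scont_asymm h1 h2).elim
  · -- the embedding
    intro X _ _ htree hcard
    rcases isEmpty_or_nonempty X with hE | hNE
    · exact ⟨fun x => (hE.false x).elim, fun a => (hE.false a).elim,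
        fun a => (hE.false a).elim⟩
    · have huniv : (Finset.univ : Finset X).card ≤ n := by
        rw [Finset.card_univ]; exact hcard
      have O : ∀ S' : Finset X, S'.card ≤ n → S'.card ≤ n → CAS.TreeCon k M S' :=
        fun S' h1 h2 => CAS.tree_con htree hkn S'.card S' le_rfl h2
      have hdvd : 2 ^ (Nat.clog 2 P - k) ∣ M := by
        rw [hM, ← hT]; exact pow_dvd_pow 2 (Nat.sub_le T k)
      obtain ⟨I, hG⟩ := CAS.ff_alloc htree hkn O Finset.univ huniv huniv M P
        (CAS.phi_mono k huniv) hPM le_rfl hdvd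
      obtain ⟨g1, g2, g3, g4⟩ := hG
      have hed : ∀ x : X, CAS.enc k M (I x) < N ∧ CAS.dec k M (CAS.enc k M (I x)) = I x :=
        fun x => CAS.enc_dec hM hk1 (I x) (g1 x (Finset.mem_univ x))
      set f : X → Fin N := fun x => ⟨CAS.enc k M (I x), (hed x).1⟩ with hf
      have hdec : ∀ x : X, CAS.dec k M (f x).val = I x := fun x => (hed x).2
      have hvalid : ∀ x : X, 1 ≤ (I x).2 := fun x => (g1 x (Finset.mem_univ x)).1
      have key : ∀ a b : X, a ≤ b ↔
          (f a = f b ∨ CAS.scont (CAS.dec k M (f a).val) (CAS.dec k M (f b).val)) := by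
        intro a b
        rw [hdec, hdec]
        constructor
        · intro hab
          rcases eq_or_lt_of_le hab with rfl | hlt
          · exact Or.inl rfl
          · obtain ⟨e1, e2⟩ := g3 a (Finset.mem_univ a) b (Finset.mem_univ b) hlt
            exact Or.inr ⟨e1, by omega, by omega⟩
        · intro h
          rcases h with heq | hsc
          · have hIab : I a = I b := by
              have h2 := congrArg (fun z : Fin N => CAS.dec k M z.val) heq
              rw [hdec, hdec] at h2
              exact h2
            by_cases hab : a ≤ b
            · exact hab
            · by_cases hba : b ≤ a
              · rcases eq_or_lt_of_le hba with rfl | hlt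
                · exact le_refl _
                · obtain ⟨e1, e2⟩ := g3 b (Finset.mem_univ b) a (Finset.mem_univ a) hlt
                  rw [hIab] at e2
                  omega
              · have hdisj := g4 a (Finset.mem_univ a) b (Finset.mem_univ b) hab hba
                have h1 := hvalid a
                have h2 := hvalid b
                rw [hIab] at hdisj
                omega
          · by_cases hab : a ≤ b
            · exact hab
            · by_cases hba : b ≤ a
              · rcases eq_or_lt_of_le hba with rfl | hlt
                · exact le_refl _
                · obtain ⟨e1, e2⟩ := g3 b (Finset.mem_univ b) a (Finset.mem_univ a) hlt
                  obtain ⟨s1, s2, s3⟩ := hsc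
                  omega
              · have hdisj := g4 a (Finset.mem_univ a) b (Finset.mem_univ b) hab hba
                have h1 := hvalid a
                have h2 := hvalid b
                obtain ⟨s1, s2, s3⟩ := hsc
                omega
      refine ⟨f, ?_, key⟩
      intro a b hab
      exact le_antisymm ((key a b).2 (Or.inl hab)) ((key b a).2 (Or.inl hab.symm))
end

section
/- There exists a constant C such that for every integer k ≥ 1 and every n ≥ 4 there exists a finite poset U with at most (C · n · (log₂ n)³ · (log₂ log₂ n)^C)^k elements such that every poset with at most n elements and tree-dimension at most k embeds into U as an induced suborder. In particular, for every fixed k there is a universal poset of size O(n^k · log^{3k+o(k)} n) for the family 𝒫(n,k) of n-element posets with tree-dimension at most k. -/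
open Finset

namespace TD

/-- window exponent -/
def ww (n : ℕ) : ℕ := Nat.log 2 (2 * Nat.log 2 n + 3) + 1
/-- alignment granularity for length ℓ -/
def pal (n ℓ : ℕ) : ℕ := 2 ^ (Nat.log 2 ℓ - ww n)
/-- allotted interval length for a subtree of size s -/
def LL (s : ℕ) : ℕ := s * (2 * Nat.log 2 s + 1)
/-- total ground-set length -/
def NN (n : ℕ) : ℕ := n * (2 * Nat.log 2 n + 1)
/-- interval containment: u ⊆ v -/
def Sub (u v : ℕ × ℕ) : Prop := v.1 ≤ u.1 ∧ u.1 + u.2 ≤ v.1 + v.2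
/-- the universal set of intervals -/
def SS (n : ℕ) : Finset (ℕ × ℕ) :=
  ((range (NN n)) ×ˢ (range (NN n + 1))).filter
    (fun q => 1 ≤ q.2 ∧ q.1 + q.2 ≤ NN n ∧ pal n q.2 ∣ q.1)

lemma pal_pos (n ℓ : ℕ) : 0 < pal n ℓ := Nat.pow_pos (by norm_num)

lemma LL_mono : Monotone LL := by
  intro s s' h
  exact Nat.mul_le_mul h (by
    have := Nat.log_mono_right (b := 2) h
    omega)

lemma pal_dvd_pal (n : ℕ) {ℓ ℓ' : ℕ} (h : ℓ ≤ ℓ') : pal n ℓ ∣ pal n ℓ' := by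
  apply pow_dvd_pow
  have := Nat.log_mono_right (b := 2) h
  omega

lemma le_LL (s : ℕ) : s ≤ LL s := Nat.le_mul_of_pos_right _ (by omega)

lemma two_pow_ww (n : ℕ) : 2 * Nat.log 2 n + 3 < 2 ^ ww n :=
  Nat.lt_pow_succ_log_self (by norm_num) _

lemma pal_LL_le {n s : ℕ} (h1 : 1 ≤ s) (h2 : s ≤ n) : pal n (LL s) ≤ s := by
  rcases le_or_gt (Nat.log 2 (LL s)) (ww n) with h | h
  · have : pal n (LL s) = 1 := by
      unfold pal; rw [Nat.sub_eq_zero_of_le h]; rfl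
    omega
  · have hL1 : 1 ≤ LL s := le_trans h1 (le_LL s)
    have hlog : 2 ^ Nat.log 2 (LL s) ≤ LL s := Nat.pow_log_le_self 2 (by omega)
    have hcoef : 2 * Nat.log 2 s + 1 < 2 ^ ww n := by
      have := two_pow_ww n
      have := Nat.log_mono_right (b := 2) h2
      omega
    have hLs : LL s < s * 2 ^ ww n := by
      exact (mul_lt_mul_iff_right₀ (by omega : 0 < s)).mpr hcoef
    have key : pal n (LL s) * 2 ^ ww n = 2 ^ Nat.log 2 (LL s) := by
      unfold pal
      rw [← pow_add]
      congr 1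
      omega
    have : pal n (LL s) * 2 ^ ww n < s * 2 ^ ww n := by
      rw [key]; exact lt_of_le_of_lt hlog hLs
    exact le_of_lt (Nat.lt_of_mul_lt_mul_right this)

end TD

namespace TD

section Pack

variable {P : Type*} [Fintype P] (r : P → P → Prop)

/-- descendants (elements below x, inclusive) -/
noncomputable def Dset (x : P) : Finset P :=
  @Finset.filter _ (fun y => r y x) (Classical.decPred _) Finset.univ

lemma mem_Dset {x y : P} : y ∈ Dset r x ↔ r y x := by simp [Dset]

/-- subtree size -/
noncomputable def sz (x : P) : ℕ := (Dset r x).card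

/-- width bound for packing a down-set -/
noncomputable def BB (F : Finset P) : ℕ :=
  LL (F.sup (sz r)) + (F.card - F.sup (sz r)) * (2 * Nat.log 2 F.card)

lemma down_Dset {G : Finset P} (hG : ∀ x ∈ G, ∀ y, r y x → y ∈ G) {y : P}
    (hy : y ∈ G) : Dset r y ⊆ G := fun z hz => hG y hy z ((mem_Dset r).mp hz)

lemma BB_le {F : Finset P} (hdown : ∀ x ∈ F, ∀ y, r y x → y ∈ F) :
    BB r F ≤ F.card * (2 * Nat.log 2 F.card + 1) := by
  have hsup : F.sup (sz r) ≤ F.card := by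
    apply Finset.sup_le
    intro y hy
    exact Finset.card_le_card (down_Dset r hdown hy)
  have h1 : LL (F.sup (sz r)) ≤ F.sup (sz r) * (2 * Nat.log 2 F.card + 1) := by
    unfold LL
    have := Nat.log_mono_right (b := 2) hsup
    exact Nat.mul_le_mul_left _ (by omega)
  unfold BB
  have h2 : (F.card - F.sup (sz r)) * (2 * Nat.log 2 F.card) ≤
      (F.card - F.sup (sz r)) * (2 * Nat.log 2 F.card + 1) :=
    Nat.mul_le_mul_left _ (by omega)
  calc LL (F.sup (sz r)) + (F.card - F.sup (sz r)) * (2 * Nat.log 2 F.card)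
      ≤ F.sup (sz r) * (2 * Nat.log 2 F.card + 1)
        + (F.card - F.sup (sz r)) * (2 * Nat.log 2 F.card + 1) := by omega
    _ = F.card * (2 * Nat.log 2 F.card + 1) := by
        rw [← add_mul]; congr 1; omega

theorem pack (n : ℕ)
    (hrefl : ∀ x : P, r x x)
    (htrans : ∀ x y z : P, r x y → r y z → r x z)
    (hanti : ∀ x y : P, r x y → r y x → x = y)
    (htree : ∀ x y z : P, r x y → r x z → r y z ∨ r z y)
    (hn : Fintype.card P ≤ n) :
    ∀ (t : ℕ) (F : Finset P), F.card ≤ t →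
    (∀ x ∈ F, ∀ y, r y x → y ∈ F) → ∀ a : ℕ, pal n (LL (F.sup (sz r))) ∣ a →
    ∃ g : P → ℕ × ℕ,
      (∀ x ∈ F, 1 ≤ (g x).2) ∧
      (∀ x ∈ F, a ≤ (g x).1 ∧ (g x).1 + (g x).2 ≤ a + BB r F) ∧
      (∀ x ∈ F, pal n ((g x).2) ∣ (g x).1) ∧
      (∀ x ∈ F, ∀ y ∈ F, (r x y ↔ Sub (g x) (g y))) := by
  intro t
  induction t with
  | zero =>
      intro F hcard _ a _
      have hF : F = ∅ := Finset.card_eq_zero.mp (Nat.le_zero.mp hcard)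
      subst hF
      exact ⟨fun _ => (0, 0), by simp, by simp, by simp, by simp⟩
  | succ t ih =>
      intro F hcard hdown a hal
      classical
      rcases F.eq_empty_or_nonempty with hF | hne
      · subst hF
        exact ⟨fun _ => (0, 0), by simp, by simp, by simp, by simp⟩
      obtain ⟨x₁, hx₁F, hx₁⟩ := Finset.exists_mem_eq_sup F hne (sz r)
      set σ₁ := sz r x₁ with hσ₁def
      -- basic facts
      have hszle : ∀ y ∈ F, sz r y ≤ σ₁ := by
        intro y hy; rw [← hx₁]; exact Finset.le_sup hy
      have hsz_le_n : ∀ y : P, sz r y ≤ n :=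
        fun y => le_trans (Finset.card_le_univ _) hn
      have hDsub : Dset r x₁ ⊆ F := down_Dset r hdown hx₁F
      have hx₁max : ∀ v ∈ F, r x₁ v → v = x₁ := by
        intro v hv hrv
        by_contra hvne
        have hss : Dset r x₁ ⊂ Dset r v := by
          constructor
          · intro y hy
            exact (mem_Dset r).mpr (htrans _ _ _ ((mem_Dset r).mp hy) hrv)
          · intro hsub
            have hv1 : v ∈ Dset r v := (mem_Dset r).mpr (hrefl v)
            have : r v x₁ := (mem_Dset r).mp (hsub hv1)
            exact hvne (hanti _ _ this hrv)
        have : σ₁ < sz r v := Finset.card_lt_card hss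
        have := hszle v hv
        omega
      have hσ₁pos : 1 ≤ σ₁ :=
        Finset.card_pos.mpr ⟨x₁, (mem_Dset r).mpr (hrefl x₁)⟩
      have hσ₁card : σ₁ ≤ F.card := Finset.card_le_card hDsub
      -- the two sub-forests
      set F'' := (Dset r x₁).erase x₁ with hF''def
      set F' := F \ Dset r x₁ with hF'def
      have hF''card : F''.card = σ₁ - 1 := by
        rw [hF''def, Finset.card_erase_of_mem ((mem_Dset r).mpr (hrefl x₁))]
        rfl
      have hF''down : ∀ x ∈ F'', ∀ y, r y x → y ∈ F'' := by
        intro x hx y hryx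
        obtain ⟨hxne, hxD⟩ := Finset.mem_erase.mp hx
        have hrx : r x x₁ := (mem_Dset r).mp hxD
        refine Finset.mem_erase.mpr ⟨?_, (mem_Dset r).mpr (htrans _ _ _ hryx hrx)⟩
        intro hyx₁
        subst hyx₁
        exact hxne (hanti _ _ hrx hryx)
      have hsupF'' : F''.sup (sz r) ≤ σ₁ - 1 := by
        apply Finset.sup_le
        intro y hy
        have := Finset.card_le_card (down_Dset r hF''down hy)
        rw [hF''card] at this
        exact this
      have hF'down : ∀ x ∈ F', ∀ y, r y x → y ∈ F' := by
        intro x hx y hryx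
        obtain ⟨hxF, hxD⟩ := Finset.mem_sdiff.mp hx
        refine Finset.mem_sdiff.mpr ⟨hdown x hxF y hryx, ?_⟩
        intro hyD
        have hyx₁ : r y x₁ := (mem_Dset r).mp hyD
        rcases htree y x₁ x hyx₁ hryx with h | h
        · have := hx₁max x hxF h
          subst this
          exact hxD ((mem_Dset r).mpr (hrefl x))
        · exact hxD ((mem_Dset r).mpr h)
      set s₂ := F'.sup (sz r) with hs₂def
      have hs₂σ₁ : s₂ ≤ σ₁ := by
        rw [hs₂def, ← hx₁]
        exact Finset.sup_mono (Finset.sdiff_subset)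
      have hs₂t' : s₂ ≤ F'.card := by
        apply Finset.sup_le
        intro y hy
        exact Finset.card_le_card (down_Dset r hF'down hy)
      have hF'card : F'.card = F.card - σ₁ := by
        rw [hF'def, Finset.card_sdiff_of_subset hDsub]
        rfl
      -- recursive call 1
      have hal1 : pal n (LL (F''.sup (sz r))) ∣ a := by
        refine dvd_trans (pal_dvd_pal n (LL_mono ?_)) (by rw [hx₁] at hal; exact hal)
        omega
      obtain ⟨g₁, h1pos, h1bd, h1al, h1iff⟩ :=
        ih F'' (by omega) hF''down a hal1
      -- recursive call 2
      set qq := pal n (LL s₂) with hqqdef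
      have hqqpos : 0 < qq := pal_pos n _
      set a' := qq * ((a + LL σ₁ + qq - 1) / qq) with ha'def
      have ha'lb : a + LL σ₁ ≤ a' := by
        have h1 := Nat.div_add_mod (a + LL σ₁ + qq - 1) qq
        have h2 := Nat.mod_lt (a + LL σ₁ + qq - 1) hqqpos
        rw [ha'def]
        omega
      have ha'ub : a' ≤ a + LL σ₁ + qq - 1 := by
        rw [ha'def, mul_comm]
        exact Nat.div_mul_le_self _ _
      have hal2 : pal n (LL (F'.sup (sz r))) ∣ a' := by
        rw [← hs₂def, ← hqqdef, ha'def]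
        exact dvd_mul_right _ _
      obtain ⟨g₂, h2pos, h2bd, h2al, h2iff⟩ :=
        ih F' (by omega) hF'down a' hal2
      -- width facts
      have hBF : BB r F = LL σ₁ + (F.card - σ₁) * (2 * Nat.log 2 F.card) := by
        unfold BB; rw [← hx₁]
      have W1 : BB r F'' + 1 ≤ LL σ₁ := by
        have h1 : BB r F'' ≤ F''.card * (2 * Nat.log 2 F''.card + 1) :=
          BB_le r hF''down
        have h2 : F''.card * (2 * Nat.log 2 F''.card + 1)
            ≤ (σ₁ - 1) * (2 * Nat.log 2 σ₁ + 1) := by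
          rw [hF''card]
          exact Nat.mul_le_mul_left _ (by
            have := Nat.log_mono_right (b := 2) (show σ₁ - 1 ≤ σ₁ by omega)
            omega)
        have h3 : (σ₁ - 1) * (2 * Nat.log 2 σ₁ + 1) + 1 ≤ σ₁ * (2 * Nat.log 2 σ₁ + 1) := by
          have e1 : (σ₁ - 1) * (2 * Nat.log 2 σ₁ + 1)
              = σ₁ * (2 * Nat.log 2 σ₁ + 1) - (2 * Nat.log 2 σ₁ + 1) := by
            rw [Nat.sub_mul, one_mul]
          have e2 : 2 * Nat.log 2 σ₁ + 1 ≤ σ₁ * (2 * Nat.log 2 σ₁ + 1) :=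
            Nat.le_mul_of_pos_left _ hσ₁pos
          omega
        have : LL σ₁ = σ₁ * (2 * Nat.log 2 σ₁ + 1) := rfl
        omega
      have hBF' : BB r F' = LL s₂ + (F'.card - s₂) * (2 * Nat.log 2 F'.card) := by
        unfold BB; rw [← hs₂def]
      have hlogF' : Nat.log 2 F'.card ≤ Nat.log 2 F.card :=
        Nat.log_mono_right (by rw [hF'card]; omega)
      have hBF2 : BB r F = LL σ₁ + F'.card * (2 * Nat.log 2 F.card) := by
        rw [hBF, hF'card]
      have W2 : a' + BB r F' ≤ a + BB r F := by
        rcases Nat.eq_zero_or_pos s₂ with hs0 | hs2pos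
        · have hF'empty : F' = ∅ := by
            rcases F'.eq_empty_or_nonempty with h | ⟨y, hy⟩
            · exact h
            · exfalso
              have h1 : 1 ≤ sz r y :=
                Finset.card_pos.mpr ⟨y, (mem_Dset r).mpr (hrefl y)⟩
              have h2 : sz r y ≤ s₂ := Finset.le_sup hy
              omega
          have hqq1 : qq = 1 := by
            rw [hqqdef, hs0]
            simp [LL, pal]
          have hBB0 : BB r F' = 0 := by
            rw [hBF', hF'empty]
            simp [LL, hs0]
          rw [hBB0, hBF2]
          omega
        · have hs₂n : s₂ ≤ n := Finset.sup_le (fun y _ => hsz_le_n y)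
          have hqs₂ : qq ≤ s₂ := pal_LL_le hs2pos hs₂n
          have h2s₂ : 2 * s₂ ≤ F.card := by
            have := hs₂t'
            rw [hF'card] at this
            omega
          have hlogstep : Nat.log 2 s₂ + 1 ≤ Nat.log 2 F.card := by
            have h1 : Nat.log 2 (s₂ * 2) = Nat.log 2 s₂ + 1 :=
              Nat.log_mul_base (by norm_num) (by omega)
            have h2 : Nat.log 2 (s₂ * 2) ≤ Nat.log 2 F.card :=
              Nat.log_mono_right (by omega)
            omega
          have key1 : LL s₂ + (qq - 1) ≤ s₂ * (2 * Nat.log 2 F.card) := by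
            have h1 : s₂ * (2 * Nat.log 2 s₂ + 2) ≤ s₂ * (2 * Nat.log 2 F.card) :=
              Nat.mul_le_mul_left _ (by omega)
            have h2 : LL s₂ + s₂ = s₂ * (2 * Nat.log 2 s₂ + 2) := by
              unfold LL; ring
            omega
          have key2 : (F'.card - s₂) * (2 * Nat.log 2 F'.card)
              ≤ (F'.card - s₂) * (2 * Nat.log 2 F.card) :=
            Nat.mul_le_mul_left _ (by omega)
          have key3 : s₂ * (2 * Nat.log 2 F.card)
              + (F'.card - s₂) * (2 * Nat.log 2 F.card)
              = F'.card * (2 * Nat.log 2 F.card) := by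
            rw [← Nat.add_mul]
            congr 1
            omega
          rw [hBF2, hBF']
          omega
      -- combined assignment
      set g : P → ℕ × ℕ := fun y =>
        if y = x₁ then (a, LL σ₁) else if y ∈ Dset r x₁ then g₁ y else g₂ y with hgdef
      have hgx₁ : g x₁ = (a, LL σ₁) := by simp [hgdef]
      have hgF'' : ∀ y ∈ F'', g y = g₁ y := by
        intro y hy
        obtain ⟨hyne, hyD⟩ := Finset.mem_erase.mp hy
        simp [hgdef, hyne, hyD]
      have hgF' : ∀ y ∈ F', g y = g₂ y := by
        intro y hy
        obtain ⟨hyF, hyD⟩ := Finset.mem_sdiff.mp hy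
        have hyne : y ≠ x₁ := by
          rintro rfl; exact hyD ((mem_Dset r).mpr (hrefl y))
        simp [hgdef, hyne, hyD]
      have hsplit : ∀ y ∈ F, y = x₁ ∨ y ∈ F'' ∨ y ∈ F' := by
        intro y hy
        by_cases h1 : y = x₁
        · exact Or.inl h1
        by_cases h2 : y ∈ Dset r x₁
        · exact Or.inr (Or.inl (Finset.mem_erase.mpr ⟨h1, h2⟩))
        · exact Or.inr (Or.inr (Finset.mem_sdiff.mpr ⟨hy, h2⟩))
      have hLLσ₁BB : LL σ₁ ≤ BB r F := by rw [hBF2]; omega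
      have hT1 : ∀ u ∈ Dset r x₁,
          a ≤ (g u).1 ∧ (g u).1 + (g u).2 ≤ a + LL σ₁ ∧ 1 ≤ (g u).2 := by
        intro u hu
        by_cases h1 : u = x₁
        · subst h1; rw [hgx₁]
          exact ⟨le_refl a, le_refl _, le_trans hσ₁pos (le_LL σ₁)⟩
        · have hu'' : u ∈ F'' := Finset.mem_erase.mpr ⟨h1, hu⟩
          rw [hgF'' u hu'']
          obtain ⟨hb1, hb2⟩ := h1bd u hu''
          exact ⟨hb1, by omega, h1pos u hu''⟩
      have hT1s : ∀ u ∈ F'', (g u).1 + (g u).2 < a + LL σ₁ := by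
        intro u hu
        rw [hgF'' u hu]
        obtain ⟨hb1, hb2⟩ := h1bd u hu
        omega
      have hV : ∀ v ∈ F',
          a + LL σ₁ ≤ (g v).1 ∧ (g v).1 + (g v).2 ≤ a + BB r F ∧ 1 ≤ (g v).2 := by
        intro v hv
        rw [hgF' v hv]
        obtain ⟨hb1, hb2⟩ := h2bd v hv
        exact ⟨le_trans ha'lb hb1, by omega, h2pos v hv⟩
      have hnr1 : ∀ u ∈ Dset r x₁, ∀ v ∈ F', ¬ r u v := by
        intro u hu v hv hr
        obtain ⟨hvF, hvD⟩ := Finset.mem_sdiff.mp hv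
        have hux : r u x₁ := (mem_Dset r).mp hu
        rcases htree u v x₁ hr hux with h | h
        · exact hvD ((mem_Dset r).mpr h)
        · exact hvD (by
            rw [hx₁max v hvF h]
            exact (mem_Dset r).mpr (hrefl x₁))
      have hnr2 : ∀ u ∈ Dset r x₁, ∀ v ∈ F', ¬ r v u := by
        intro u hu v hv hr
        obtain ⟨hvF, hvD⟩ := Finset.mem_sdiff.mp hv
        exact hvD ((mem_Dset r).mpr (htrans _ _ _ hr ((mem_Dset r).mp hu)))
      have hmemD : ∀ u, u = x₁ ∨ u ∈ F'' → u ∈ Dset r x₁ := by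
        intro u hu
        rcases hu with h | h
        · subst h; exact (mem_Dset r).mpr (hrefl u)
        · exact (Finset.mem_erase.mp h).2
      refine ⟨g, ?_, ?_, ?_, ?_⟩
      · -- positivity of lengths
        intro x hx
        rcases hsplit x hx with h | h | h
        · subst h; rw [hgx₁]; exact le_trans hσ₁pos (le_LL σ₁)
        · rw [hgF'' x h]; exact h1pos x h
        · rw [hgF' x h]; exact h2pos x h
      · -- bounds
        intro x hx
        rcases hsplit x hx with h | h | h
        · subst h; rw [hgx₁]
          exact ⟨le_refl a, by omega⟩
        · have h1 := hT1 x (hmemD x (Or.inr h))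
          have h2 := hT1s x h
          exact ⟨h1.1, by omega⟩
        · have := hV x h
          exact ⟨by omega, by omega⟩
      · -- alignment
        intro x hx
        rcases hsplit x hx with h | h | h
        · subst h; rw [hgx₁]
          rw [hx₁] at hal
          exact hal
        · rw [hgF'' x h]; exact h1al x h
        · rw [hgF' x h]; exact h2al x h
      · -- the order iff
        intro x hx y hy
        rcases hsplit x hx with hx1 | hx1 | hx1 <;> rcases hsplit y hy with hy1 | hy1 | hy1
        · -- x = x₁, y = x₁
          subst hx1; subst hy1
          exact iff_of_true (hrefl _) ⟨le_refl _, le_refl _⟩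
        · -- x = x₁, y ∈ F''
          subst hx1
          apply iff_of_false
          · intro hr
            obtain ⟨hyne, hyD⟩ := Finset.mem_erase.mp hy1
            exact hyne (hanti _ _ ((mem_Dset r).mp hyD) hr)
          · intro hsub
            have h1 := hT1s y hy1
            have h2 := hsub.2
            rw [hgx₁] at h2
            simp at h2
            omega
        · -- x = x₁, y ∈ F'
          apply iff_of_false
          · exact hnr1 x (hmemD x (Or.inl hx1)) y hy1
          · intro hsub
            have h1 := hT1 x (hmemD x (Or.inl hx1))
            have h2 := hV y hy1
            have h3 := hsub.1
            omega
        · -- x ∈ F'', y = x₁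
          subst hy1
          apply iff_of_true
          · exact (mem_Dset r).mp (hmemD x (Or.inr hx1))
          · have h1 := hT1 x (hmemD x (Or.inr hx1))
            rw [hgx₁]
            exact ⟨h1.1, h1.2.1⟩
        · -- x, y ∈ F''
          rw [hgF'' x hx1, hgF'' y hy1]
          exact h1iff x hx1 y hy1
        · -- x ∈ F'', y ∈ F'
          apply iff_of_false
          · exact hnr1 x (hmemD x (Or.inr hx1)) y hy1
          · intro hsub
            have h1 := hT1 x (hmemD x (Or.inr hx1))
            have h2 := hV y hy1
            have h3 := hsub.1
            omega
        · -- x ∈ F', y = x₁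
          apply iff_of_false
          · exact hnr2 y (hmemD y (Or.inl hy1)) x hx1
          · intro hsub
            have h1 := hT1 y (hmemD y (Or.inl hy1))
            have h2 := hV x hx1
            have h3 := hsub.2
            omega
        · -- x ∈ F', y ∈ F''
          apply iff_of_false
          · exact hnr2 y (hmemD y (Or.inr hy1)) x hx1
          · intro hsub
            have h1 := hT1 y (hmemD y (Or.inr hy1))
            have h2 := hV x hx1
            have h3 := hsub.2
            omega
        · -- x, y ∈ F'
          rw [hgF' x hx1, hgF' y hy1]
          exact h2iff x hx1 y hy1

theorem embed_tree {n : ℕ} (hto : IsTreeOrderRel P r) (hn : Fintype.card P ≤ n) :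
    ∃ g : P → ℕ × ℕ, (∀ x, g x ∈ SS n) ∧ ∀ x y, r x y ↔ Sub (g x) (g y) := by
  obtain ⟨hpo, htr⟩ := hto
  haveI := hpo
  have hrefl : ∀ x : P, r x x := fun x => refl_of r x
  have htrans : ∀ x y z : P, r x y → r y z → r x z := fun _ _ _ h h' => _root_.trans_of r h h'
  have hanti : ∀ x y : P, r x y → r y x → x = y := fun _ _ h h' => antisymm_of r h h'
  obtain ⟨g, h0, h1, h2, h3⟩ := pack r n hrefl htrans hanti htr hn
    (Fintype.card P) Finset.univ (by rw [Finset.card_univ]) (by simp) 0 (dvd_zero _)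
  have hBB : BB r Finset.univ ≤ NN n := by
    refine le_trans (BB_le r (by simp)) ?_
    unfold NN
    rw [Finset.card_univ]
    exact Nat.mul_le_mul hn (by
      have := Nat.log_mono_right (b := 2) hn
      omega)
  refine ⟨g, ?_, fun x y => h3 x (Finset.mem_univ x) y (Finset.mem_univ y)⟩
  intro x
  have hx0 := h0 x (Finset.mem_univ x)
  have hx1 := h1 x (Finset.mem_univ x)
  have hx2 := h2 x (Finset.mem_univ x)
  unfold SS
  rw [Finset.mem_filter, Finset.mem_product, Finset.mem_range, Finset.mem_range]
  refine ⟨⟨by omega, by omega⟩, hx0, by omega, hx2⟩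

end Pack

section Count

lemma card_multiples_le (M d : ℕ) : ((range M).filter (fun a => d ∣ a)).card ≤ M / d + 1 := by
  rcases Nat.eq_zero_or_pos d with hd | hd
  · subst hd
    have hsub : (range M).filter (fun a => (0:ℕ) ∣ a) ⊆ {0} := by
      intro a ha
      rw [Finset.mem_filter] at ha
      have : a = 0 := Nat.eq_zero_of_zero_dvd ha.2
      simp [this]
    exact le_trans (Finset.card_le_card hsub) (by simp)
  · rw [← Finset.card_range (M / d + 1)]
    apply Finset.card_le_card_of_injOn (fun a => a / d)
    · intro a ha
      rw [Finset.mem_coe, Finset.mem_filter, Finset.mem_range] at ha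
      rw [Finset.mem_coe, Finset.mem_range]
      have := Nat.div_le_div_right (c := d) (Nat.le_of_lt ha.1 : a ≤ M)
      show a / d < M / d + 1
      omega
    · intro a ha b hb hab
      rw [Finset.mem_coe, Finset.mem_filter] at ha hb
      have ha' := Nat.div_mul_cancel ha.2
      have hb' := Nat.div_mul_cancel hb.2
      simp only at hab
      rw [← ha', ← hb', hab]

lemma sum_div_pal_le (n N : ℕ) : ∀ T : ℕ,
    ∑ ℓ ∈ range (2 ^ T), N / pal n ℓ ≤ N + T * (N * 2 ^ ww n) := by
  intro T
  induction T with
  | zero =>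
      simp [pal]
  | succ T ihT =>
      have hsplit : range (2 ^ (T + 1)) = Finset.Ico 0 (2 ^ (T + 1)) := by
        rw [Finset.range_eq_Ico]
      rw [hsplit, ← Finset.sum_Ico_consecutive _ (Nat.zero_le (2 ^ T))
        (Nat.pow_le_pow_right (by norm_num) (by omega))]
      have hblock : ∑ ℓ ∈ Finset.Ico (2 ^ T) (2 ^ (T + 1)), N / pal n ℓ ≤ N * 2 ^ ww n := by
        have hterm : ∀ ℓ ∈ Finset.Ico (2 ^ T) (2 ^ (T + 1)),
            N / pal n ℓ ≤ N / 2 ^ (T - ww n) := by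
          intro ℓ hℓ
          rw [Finset.mem_Ico] at hℓ
          have hℓ0 : ℓ ≠ 0 := by
            have : 0 < 2 ^ T := Nat.pow_pos (show 0 < 2 by norm_num)
            omega
          have hlog : T ≤ Nat.log 2 ℓ := (Nat.le_log_iff_pow_le (by norm_num) hℓ0).mpr hℓ.1
          have hpal : 2 ^ (T - ww n) ≤ pal n ℓ := by
            unfold pal
            exact Nat.pow_le_pow_right (by norm_num) (by omega)
          exact Nat.div_le_div_left hpal (Nat.pow_pos (by norm_num))
        calc ∑ ℓ ∈ Finset.Ico (2 ^ T) (2 ^ (T + 1)), N / pal n ℓ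
            ≤ ∑ _ℓ ∈ Finset.Ico (2 ^ T) (2 ^ (T + 1)), N / 2 ^ (T - ww n) :=
              Finset.sum_le_sum hterm
          _ = 2 ^ T * (N / 2 ^ (T - ww n)) := by
              rw [Finset.sum_const, Nat.card_Ico, smul_eq_mul]
              congr 1
              rw [pow_succ]
              omega
          _ ≤ N * 2 ^ ww n := by
              have hmin : T - (T - ww n) ≤ ww n := by omega
              have hsplit2 : 2 ^ T = 2 ^ (T - (T - ww n)) * 2 ^ (T - ww n) := by
                rw [← pow_add]
                congr 1
                omega
              rw [hsplit2, mul_assoc]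
              have h1 : 2 ^ (T - ww n) * (N / 2 ^ (T - ww n)) ≤ N := Nat.mul_div_le N _
              calc 2 ^ (T - (T - ww n)) * (2 ^ (T - ww n) * (N / 2 ^ (T - ww n)))
                  ≤ 2 ^ ww n * N :=
                    Nat.mul_le_mul (Nat.pow_le_pow_right (by norm_num) hmin) h1
                _ = N * 2 ^ ww n := by ring
      rw [Finset.range_eq_Ico] at ihT
      have hexp : (T + 1) * (N * 2 ^ ww n) = T * (N * 2 ^ ww n) + N * 2 ^ ww n := by ring
      omega

lemma card_SS_le {n : ℕ} (hn : 4 ≤ n) :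
    (SS n).card ≤ 91 * n * (Nat.log 2 n) ^ 3 := by
  set b := Nat.log 2 n with hbdef
  have hb : 2 ≤ b := by
    rw [hbdef]
    exact (Nat.le_log_iff_pow_le (by norm_num) (by omega : n ≠ 0)).mpr
      (by omega : 2 ^ 2 ≤ n)
  have h1 : (SS n).card ≤ ∑ ℓ ∈ range (NN n + 1), (NN n / pal n ℓ + 1) := by
    have hsub : SS n ⊆ (range (NN n + 1)).biUnion
        (fun ℓ => ((range (NN n)).filter (fun a => pal n ℓ ∣ a)).image (fun a => (a, ℓ))) := by
      intro q hq
      unfold SS at hq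
      rw [Finset.mem_filter, Finset.mem_product] at hq
      obtain ⟨⟨hq1, hq2⟩, _, _, hq5⟩ := hq
      rw [Finset.mem_biUnion]
      exact ⟨q.2, hq2, Finset.mem_image.mpr ⟨q.1, Finset.mem_filter.mpr ⟨hq1, hq5⟩, rfl⟩⟩
    refine le_trans (Finset.card_le_card hsub) (le_trans Finset.card_biUnion_le ?_)
    apply Finset.sum_le_sum
    intro ℓ _
    exact le_trans Finset.card_image_le (card_multiples_le _ _)
  have h2 : NN n + 1 ≤ 2 ^ (3 * b + 2) := by
    have hn1 : n ≤ 2 ^ (b + 1) - 1 := by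
      have := Nat.lt_pow_succ_log_self (by norm_num : 1 < 2) n
      rw [← hbdef] at this
      omega
    have e1 : NN n ≤ (2 ^ (b + 1) - 1) * 2 ^ (2 * b + 1) := by
      have hb1 : 2 * b + 1 ≤ 2 ^ (2 * b + 1) := by
        have : 2 * b + 1 < 2 ^ (2 * b + 1) := Nat.lt_two_pow_self
        omega
      exact Nat.mul_le_mul hn1 hb1
    have e2 : (2 ^ (b + 1) - 1) * 2 ^ (2 * b + 1) + 2 ^ (2 * b + 1) = 2 ^ (3 * b + 2) := by
      rw [Nat.sub_mul, one_mul]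
      have e3 : (2:ℕ) ^ (b + 1) * 2 ^ (2 * b + 1) = 2 ^ (3 * b + 2) := by
        rw [← pow_add]; congr 1; omega
      have hle : (2:ℕ) ^ (2 * b + 1) ≤ 2 ^ (b + 1) * 2 ^ (2 * b + 1) :=
        Nat.le_mul_of_pos_left _ (Nat.pow_pos (by norm_num))
      omega
    have e4 : 1 ≤ (2:ℕ) ^ (2 * b + 1) := Nat.one_le_two_pow
    omega
  have h3 : ∑ ℓ ∈ range (NN n + 1), NN n / pal n ℓ
      ≤ NN n + (3 * b + 2) * (NN n * 2 ^ ww n) := by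
    refine le_trans (Finset.sum_le_sum_of_subset (Finset.range_subset_range.mpr h2))
      (sum_div_pal_le n (NN n) (3 * b + 2))
  have h4 : 2 ^ ww n ≤ 4 * b + 6 := by
    unfold ww
    rw [← hbdef, pow_succ]
    have := Nat.pow_log_le_self 2 (show 2 * b + 3 ≠ 0 by omega)
    omega
  have h5 : NN n ≤ 3 * (n * b) := by
    unfold NN
    rw [← hbdef]
    calc n * (2 * b + 1) ≤ n * (3 * b) := Nat.mul_le_mul_left _ (by omega)
      _ = 3 * (n * b) := by ring
  have hsum1 : ∑ ℓ ∈ range (NN n + 1), (NN n / pal n ℓ + 1)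
      = (∑ ℓ ∈ range (NN n + 1), NN n / pal n ℓ) + (NN n + 1) := by
    rw [Finset.sum_add_distrib, Finset.sum_const, Finset.card_range, smul_eq_mul, mul_one]
  set X := n * b ^ 3 with hXdef
  have hfin : (3 * b + 2) * (NN n * 2 ^ ww n) ≤ 84 * X := by
    calc (3 * b + 2) * (NN n * 2 ^ ww n)
        ≤ (4 * b) * ((3 * (n * b)) * (4 * b + 6)) :=
          Nat.mul_le_mul (by omega) (Nat.mul_le_mul h5 h4)
      _ = 48 * (n * b ^ 3) + 36 * (n * b ^ 2 * 2) := by ring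
      _ ≤ 48 * (n * b ^ 3) + 36 * (n * b ^ 2 * b) := by
          exact Nat.add_le_add_left (Nat.mul_le_mul_left _ (Nat.mul_le_mul_left _ hb)) _
      _ = 84 * X := by rw [hXdef]; ring
  have hXnb : 7 * (n * b) ≤ 7 * X := by
    rw [hXdef]
    refine Nat.mul_le_mul_left _ (Nat.mul_le_mul_left _ ?_)
    calc b = b * 1 * 1 := by ring
      _ ≤ b * b * b := Nat.mul_le_mul (Nat.mul_le_mul_left _ (by omega)) (by omega)
      _ = b ^ 3 := by ring
  have hXpos : 1 ≤ X := by
    rw [hXdef]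
    have : 0 < n * b ^ 3 := Nat.mul_pos (by omega) (Nat.pow_pos (by omega))
    omega
  have hgoal : 91 * n * b ^ 3 = 91 * X := by rw [hXdef]; ring
  rw [hgoal]
  have hnb7 : NN n + NN n + 1 ≤ 7 * (n * b) := by
    have hnb1 : 1 ≤ n * b := by
      have : 0 < n * b := Nat.mul_pos (by omega) (by omega)
      omega
    omega
  omega

end Count

end TD

/-- For every `k ≥ 1` there is a universal poset of size
`(C · n · (log₂ n)³ · (log₂ log₂ n)^C)^k = O(n^k log^{3k+o(k)} n)` for the
family of posets with at most `n` elements and tree-dimension at most `k`. -/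
theorem small_universal_poset_tree_dim :
    ∃ C : ℕ, ∀ k n : ℕ, 1 ≤ k → 4 ≤ n →
      ∃ (N : ℕ) (r : Fin N → Fin N → Prop),
        N ≤ (C * n * (Nat.log 2 n) ^ 3 * (Nat.log 2 (Nat.log 2 n)) ^ C) ^ k ∧
        IsPartialOrder (Fin N) r ∧
        ∀ (P : Type) [Fintype P] [PartialOrder P],
          Fintype.card P ≤ n → TreeDimLE P k →
          ∃ f : P → Fin N,
            Function.Injective f ∧ ∀ a b : P, a ≤ b ↔ r (f a) (f b) := by
  refine ⟨91, ?_⟩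
  intro k n hk hn
  set b := Nat.log 2 n with hbdef
  have hb : 2 ≤ b := by
    rw [hbdef]
    exact (Nat.le_log_iff_pow_le (by norm_num) (by omega : n ≠ 0)).mpr
      (by omega : 2 ^ 2 ≤ n)
  set M := (TD.SS n).card with hMdef
  have hcardW : Fintype.card (Fin k → {q // q ∈ TD.SS n}) = M ^ k := by
    rw [Fintype.card_fun, Fintype.card_coe, Fintype.card_fin]
  have e := Fintype.equivFinOfCardEq hcardW
  refine ⟨M ^ k,
    fun i j => ∀ q : Fin k, TD.Sub ((e.symm i) q).val ((e.symm j) q).val, ?_, ?_, ?_⟩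
  · -- size bound
    apply Nat.pow_le_pow_left
    have hM1 : M ≤ 91 * n * b ^ 3 := TD.card_SS_le hn
    have hlogb : 1 ≤ Nat.log 2 b :=
      (Nat.le_log_iff_pow_le (by norm_num) (by omega : b ≠ 0)).mpr (by omega : 2 ^ 1 ≤ b)
    have : 1 ≤ Nat.log 2 b ^ 91 := Nat.one_le_pow _ _ (by omega)
    calc M ≤ 91 * n * b ^ 3 := hM1
      _ ≤ 91 * n * b ^ 3 * Nat.log 2 b ^ 91 := Nat.le_mul_of_pos_right _ (by omega)
  · -- partial order
    exact
      { refl := fun i q => ⟨le_refl _, le_refl _⟩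
        trans := fun i j l hij hjl q =>
          ⟨le_trans (hjl q).1 (hij q).1, le_trans (hij q).2 (hjl q).2⟩
        antisymm := by
          intro i j hij hji
          have hsymm : e.symm i = e.symm j := by
            funext q
            apply Subtype.ext
            have h1 := (hij q).1
            have h2 := (hji q).1
            have h3 := (hij q).2
            have h4 := (hji q).2
            have hfst : ((e.symm i) q).val.1 = ((e.symm j) q).val.1 := le_antisymm h2 h1
            have hsnd : ((e.symm i) q).val.2 = ((e.symm j) q).val.2 := by omega
            exact Prod.ext hfst hsnd
          have := congrArg e hsymm
          rwa [Equiv.apply_symm_apply, Equiv.apply_symm_apply] at this }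
  · -- universality
    intro P _ _ hcardP hdim
    obtain ⟨rs, hrs, hiff⟩ := hdim
    have HG : ∀ q : Fin k, ∃ g : P → ℕ × ℕ,
        (∀ x, g x ∈ TD.SS n) ∧ ∀ x y, rs q x y ↔ TD.Sub (g x) (g y) :=
      fun q => TD.embed_tree (rs q) (hrs q) hcardP
    choose g hg1 hg2 using HG
    refine ⟨fun x => e (fun q => ⟨g q x, hg1 q x⟩), ?_, ?_⟩
    · intro x y hxy
      have h := e.injective hxy
      have hq : ∀ q : Fin k, g q x = g q y := by
        intro q
        have := congrFun h q
        exact congrArg Subtype.val this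
      have hxle : x ≤ y := by
        rw [hiff]
        intro q
        rw [hg2 q]
        rw [hq q]
        exact ⟨le_refl _, le_refl _⟩
      have hyle : y ≤ x := by
        rw [hiff]
        intro q
        rw [hg2 q]
        rw [hq q]
        exact ⟨le_refl _, le_refl _⟩
      exact le_antisymm hxle hyle
    · intro x y
      rw [hiff]
      constructor
      · intro h q
        rw [Equiv.symm_apply_apply, Equiv.symm_apply_apply]
        exact (hg2 q x y).mp (h q)
      · intro h q
        have := h q
        rw [Equiv.symm_apply_apply, Equiv.symm_apply_apply] at this
        exact (hg2 q x y).mpr this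
end

section
/- For every finite tree order (X, ≤) with n elements there exists an injective map assigning to each x ∈ X a pair of natural numbers (a_x, b_x) with 1 ≤ a_x ≤ b_x ≤ n such that for all u, v ∈ X: u ≤ v if and only if a_v ≤ a_u and b_u ≤ b_v (i.e., the interval [a_u, b_u] is contained in [a_v, b_v]). In particular, ancestry in n-node rooted forests can be encoded by interval containment with all interval endpoints in [1, n]. -/
private theorem dfs_aux (n : ℕ) : ∀ (X : Type) [Fintype X] [PartialOrder X],
    Fintype.card X = n → IsTreeOrder X →
    ∃ a b : X → ℕ,
      (∀ x : X, 1 ≤ a x ∧ a x ≤ b x ∧ b x ≤ n) ∧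
      (∀ u v : X, u ≤ v ↔ (a v ≤ a u ∧ b u ≤ b v)) := by
  induction n using Nat.strong_induction_on with
  | _ n IH =>
    intro X _ _ hcard htree
    classical
    rcases Nat.eq_zero_or_pos n with h0 | hpos
    · haveI : IsEmpty X := Fintype.card_eq_zero_iff.mp (hcard.trans h0)
      exact ⟨fun _ => 1, fun _ => 1, fun x => isEmptyElim x, fun u => isEmptyElim u⟩
    · haveI : Nonempty X := Fintype.card_pos_iff.mp (hcard ▸ hpos)
      obtain ⟨m, -, hmax⟩ := (Finset.univ : Finset X).exists_maximal Finset.univ_nonempty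
      have hm : ∀ v : X, m ≤ v → v = m := fun v h => by
        by_contra hv
        exact hv (le_antisymm (hmax (Finset.mem_univ v) h) h)
      set k := Fintype.card {y : X // ¬ y ≤ m} with hk
      set d := Fintype.card {y : X // y < m} with hd
      -- cardinality bookkeeping
      have hfilter : Finset.univ.filter (· ≤ m) = insert m (Finset.univ.filter (· < m)) := by
        ext x
        simp [le_iff_lt_or_eq, or_comm]
      have hcard1 : Fintype.card {y : X // y ≤ m} = d + 1 := by
        rw [Fintype.card_subtype, hfilter, Finset.card_insert_of_notMem (by simp),
          ← Fintype.card_subtype, hd]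
      have hsplit : Fintype.card {y : X // y ≤ m} + k = n := by
        rw [hk, Fintype.card_subtype, Fintype.card_subtype, ← hcard, ← Finset.card_univ]
        exact Finset.card_filter_add_card_filter_not _
      have hkdn : d + 1 + k = n := by omega
      -- tree orders on the pieces
      have htreeD : IsTreeOrder {y : X // y < m} := fun x y z hxy hxz =>
        (htree x.1 y.1 z.1 hxy hxz).imp id id
      have htreeR : IsTreeOrder {y : X // ¬ y ≤ m} := fun x y z hxy hxz =>
        (htree x.1 y.1 z.1 hxy hxz).imp id id
      obtain ⟨aD, bD, hD1, hD2⟩ := IH d (by omega) {y : X // y < m} rfl htreeD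
      obtain ⟨aR, bR, hR1, hR2⟩ := IH k (by omega) {y : X // ¬ y ≤ m} rfl htreeR
      -- cross-comparability facts
      have cross1 : ∀ u v : X, ¬ u ≤ m → v ≤ m → ¬ u ≤ v :=
        fun u v hu hv huv => hu (huv.trans hv)
      have cross2 : ∀ u v : X, ¬ u ≤ m → v ≤ m → ¬ v ≤ u := by
        intro u v hu hv hvu
        rcases htree v m u hv hvu with h | h
        · exact hu ((hm u h) ▸ le_refl m)
        · exact hu h
      -- the glued labeling
      set A : X → ℕ := fun x =>
        if h : x ≤ m then
          (if h' : x = m then k + 1 else aD ⟨x, h.lt_of_ne h'⟩ + k)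
        else aR ⟨x, h⟩ with hA
      set B : X → ℕ := fun x =>
        if h : x ≤ m then
          (if h' : x = m then n else bD ⟨x, h.lt_of_ne h'⟩ + k)
        else bR ⟨x, h⟩ with hB
      have hAm : A m = k + 1 := by simp [hA]
      have hBm : B m = n := by simp [hB]
      have hAD : ∀ (x : X) (h : x < m), A x = aD ⟨x, h⟩ + k := by
        intro x h; simp [hA, h.le, h.ne]
      have hBD : ∀ (x : X) (h : x < m), B x = bD ⟨x, h⟩ + k := by
        intro x h; simp [hB, h.le, h.ne]
      have hAR : ∀ (x : X) (h : ¬ x ≤ m), A x = aR ⟨x, h⟩ := by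
        intro x h; simp [hA, h]
      have hBR : ∀ (x : X) (h : ¬ x ≤ m), B x = bR ⟨x, h⟩ := by
        intro x h; simp [hB, h]
      have tri : ∀ x : X, ¬ x ≤ m ∨ x = m ∨ x < m := by
        intro x
        by_cases h : x ≤ m
        · by_cases h' : x = m
          · exact Or.inr (Or.inl h')
          · exact Or.inr (Or.inr (h.lt_of_ne h'))
        · exact Or.inl h
      refine ⟨A, B, ?_, ?_⟩
      · intro x
        rcases tri x with hx | hx | hx
        · have := hR1 ⟨x, hx⟩
          rw [hAR x hx, hBR x hx]
          omega
        · subst hx; rw [hAm, hBm]; omega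
        · have := hD1 ⟨x, hx⟩
          rw [hAD x hx, hBD x hx]
          omega
      · intro u v
        rcases tri u with hu | hu | hu <;> rcases tri v with hv | hv | hv
        · -- both in R
          rw [hAR u hu, hBR u hu, hAR v hv, hBR v hv]
          exact hR2 ⟨u, hu⟩ ⟨v, hv⟩
        · -- u in R, v = m
          subst hv
          have h1 := cross1 u v hu le_rfl
          have h2 := hR1 ⟨u, hu⟩
          rw [hAR u hu, hAm]
          simp only [h1, false_iff]
          omega
        · -- u in R, v < m
          have h1 := cross1 u v hu hv.le
          have h2 := hR1 ⟨u, hu⟩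
          have h3 := hD1 ⟨v, hv⟩
          rw [hAR u hu, hAD v hv]
          simp only [h1, false_iff]
          omega
        · -- u = m, v in R
          subst hu
          have h1 := cross2 v u hv le_rfl
          have h2 := hR1 ⟨v, hv⟩
          rw [hBR v hv, hBm]
          simp only [h1, false_iff]
          omega
        · -- u = m, v = m
          subst hu; subst hv; simp
        · -- u = m, v < m
          subst hu
          have h1 : ¬ u ≤ v := fun h => absurd ((hm v h) ▸ hv) (lt_irrefl _)
          have h3 := hD1 ⟨v, hv⟩
          rw [hBm, hBD v hv]
          simp only [h1, false_iff]
          omega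
        · -- u < m, v in R
          have h1 := cross2 v u hv hu.le
          have h2 := hD1 ⟨u, hu⟩
          have h3 := hR1 ⟨v, hv⟩
          rw [hBD u hu, hBR v hv]
          simp only [h1, false_iff]
          omega
        · -- u < m, v = m
          subst hv
          have h2 := hD1 ⟨u, hu⟩
          rw [hAD u hu, hBD u hu, hAm, hBm]
          simp only [hu.le, true_iff]
          omega
        · -- both below m
          rw [hAD u hu, hBD u hu, hAD v hv, hBD v hv]
          have := hD2 ⟨u, hu⟩ ⟨v, hv⟩
          constructor
          · intro h
            have := this.mp h
            omega
          · intro h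
            exact this.mpr ⟨by omega, by omega⟩

/-- The classical DFS-interval ancestry-labeling scheme: every finite tree
order with `n` elements can be labeled by intervals `[a_x, b_x]` with
endpoints in `[1, n]`, with ancestry equivalent to interval containment. -/
theorem dfs_interval_scheme (X : Type) [Fintype X] [PartialOrder X]
    (h : IsTreeOrder X) :
    ∃ a b : X → ℕ,
      (∀ x : X, 1 ≤ a x ∧ a x ≤ b x ∧ b x ≤ Fintype.card X) ∧
      Function.Injective (fun x => (a x, b x)) ∧
      (∀ u v : X, u ≤ v ↔ (a v ≤ a u ∧ b u ≤ b v)) := by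
  obtain ⟨a, b, h1, h2⟩ := dfs_aux (Fintype.card X) X rfl h
  refine ⟨a, b, h1, ?_, h2⟩
  intro u v huv
  simp only [Prod.mk.injEq] at huv
  exact le_antisymm ((h2 u v).mpr ⟨huv.1.ge, huv.2.le⟩) ((h2 v u).mpr ⟨huv.1.le, huv.2.ge⟩)
end
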